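/- arXiv:2001.10676 — 3 statements merged into one kernel-verified Lean document; each statement's English description precedes it below -/
import Mathlib

section
/- Every quaternion matrix Q ∈ ℍ^{N₁×N₂} admits a quaternion singular value decomposition: there exist a unitary quaternion matrix U ∈ ℍ^{N₁×N₁} (i.e., U Uᴴ = Uᴴ U = I), a unitary quaternion matrix V ∈ ℍ^{N₂×N₂}, and a rectangular diagonal matrix Λ ∈ ℝ^{N₁×N₂} whose diagonal entries are nonnegative real numbers, such that Q = U Λ Vᴴ. -/
open Matrix

noncomputable section

/-- The two complex components of the Cayley–Dickson form of a quaternion. -/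
def qC1 (q : Quaternion ℝ) : ℂ := ⟨q.re, q.imI⟩
def qC2 (q : Quaternion ℝ) : ℂ := ⟨q.imJ, q.imK⟩

/-- The isomorphic complex representation `f` of a quaternion matrix:
`f(Q) = [[Z₁, Z₂], [−Z₂*, Z₁*]]` with `Z₁ = Q₀ + Q₁ i`, `Z₂ = Q₂ + Q₃ i`. -/
def qf {N₁ N₂ : ℕ} (Q : Matrix (Fin N₁) (Fin N₂) (Quaternion ℝ)) :
    Matrix (Fin N₁ ⊕ Fin N₁) (Fin N₂ ⊕ Fin N₂) ℂ :=
  Matrix.fromBlocks (Matrix.of fun m n => qC1 (Q m n)) (Matrix.of fun m n => qC2 (Q m n))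
    (Matrix.of fun m n => -star (qC2 (Q m n))) (Matrix.of fun m n => star (qC1 (Q m n)))

/-- A square quaternion matrix is unitary if `U Uᴴ = Uᴴ U = I`. -/
def qUnitary {N : ℕ} (U : Matrix (Fin N) (Fin N) (Quaternion ℝ)) : Prop :=
  U * Uᴴ = 1 ∧ Uᴴ * U = 1

/-- A rectangular real matrix is "rectangular diagonal with nonnegative diagonal entries". -/
def recDiagNonneg {N₁ N₂ : ℕ} (Λ : Matrix (Fin N₁) (Fin N₂) ℝ) : Prop :=
  (∀ (m : Fin N₁) (n : Fin N₂), (m : ℕ) ≠ (n : ℕ) → Λ m n = 0) ∧ ∀ m n, 0 ≤ Λ m n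

/-- View a real matrix as a quaternion matrix. -/
def rToQ {N₁ N₂ : ℕ} (Λ : Matrix (Fin N₁) (Fin N₂) ℝ) :
    Matrix (Fin N₁) (Fin N₂) (Quaternion ℝ) :=
  Λ.map (algebraMap ℝ (Quaternion ℝ))

/-- `IsQSVD Q U Λ V` : `Q = U Λ Vᴴ` is a quaternion singular value decomposition. -/
def IsQSVD {N₁ N₂ : ℕ} (Q : Matrix (Fin N₁) (Fin N₂) (Quaternion ℝ))
    (U : Matrix (Fin N₁) (Fin N₁) (Quaternion ℝ))
    (Λ : Matrix (Fin N₁) (Fin N₂) ℝ)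
    (V : Matrix (Fin N₂) (Fin N₂) (Quaternion ℝ)) : Prop :=
  qUnitary U ∧ qUnitary V ∧ recDiagNonneg Λ ∧ Q = U * rToQ Λ * Vᴴ

/-- The quaternion nuclear norm: `½ Σ_j sqrt(λ_j)`, `λ_j` the eigenvalues of `f(X)ᴴ f(X)`. -/
noncomputable def qNuclearNorm {N₁ N₂ : ℕ}
    (X : Matrix (Fin N₁) (Fin N₂) (Quaternion ℝ)) : ℝ :=
  (1 / 2) * ∑ j, Real.sqrt ((Matrix.isHermitian_conjTranspose_mul_self (qf X)).eigenvalues j)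

/-- The quaternion Frobenius norm. -/
noncomputable def qFrob {M N : ℕ} (X : Matrix (Fin M) (Fin N) (Quaternion ℝ)) : ℝ :=
  Real.sqrt (∑ m, ∑ n, ‖X m n‖ ^ 2)

/-- The spectral norm of a quaternion matrix: the square root of the largest eigenvalue
of `f(E)ᴴ f(E)`. -/
noncomputable def qSpectralNorm {N₁ N₂ : ℕ}
    (E : Matrix (Fin N₁) (Fin N₂) (Quaternion ℝ)) : ℝ :=
  ⨆ j, Real.sqrt ((Matrix.isHermitian_conjTranspose_mul_self (qf E)).eigenvalues j)

namespace QSVDaux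

local notation "ℍ" => Quaternion ℝ

/-- Inverse of the Cayley–Dickson decomposition. -/
def cd (a b : ℂ) : ℍ := ⟨a.re, a.im, b.re, b.im⟩

@[simp] lemma qC1_cd (a b : ℂ) : qC1 (cd a b) = a := rfl
@[simp] lemma qC2_cd (a b : ℂ) : qC2 (cd a b) = b := rfl

lemma quat_ext {p q : ℍ} (h1 : qC1 p = qC1 q) (h2 : qC2 p = qC2 q) : p = q := by
  have e1 := congrArg Complex.re h1
  have e2 := congrArg Complex.im h1
  have e3 := congrArg Complex.re h2
  have e4 := congrArg Complex.im h2
  exact QuaternionAlgebra.ext e1 e2 e3 e4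

@[simp] lemma qC1_zero : qC1 0 = 0 := rfl
@[simp] lemma qC2_zero : qC2 0 = 0 := rfl
@[simp] lemma qC1_one : qC1 1 = 1 := by apply Complex.ext <;> rfl
@[simp] lemma qC2_one : qC2 1 = 0 := by apply Complex.ext <;> rfl

lemma qC1_add (p q : ℍ) : qC1 (p + q) = qC1 p + qC1 q := by
  apply Complex.ext <;> simp [qC1]
lemma qC2_add (p q : ℍ) : qC2 (p + q) = qC2 p + qC2 q := by
  apply Complex.ext <;> simp [qC2]

/-- `qC1` as an additive monoid hom. -/
def qC1h : ℍ →+ ℂ := { toFun := qC1, map_zero' := rfl, map_add' := qC1_add }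
def qC2h : ℍ →+ ℂ := { toFun := qC2, map_zero' := rfl, map_add' := qC2_add }

lemma qC1_mul (p q : ℍ) : qC1 (p * q) = qC1 p * qC1 q - qC2 p * star (qC2 q) := by
  apply Complex.ext <;>
    simp [qC1, qC2, Quaternion.re_mul, Quaternion.imI_mul, Complex.mul_re, Complex.mul_im] <;> ring

lemma qC2_mul (p q : ℍ) : qC2 (p * q) = qC1 p * qC2 q + qC2 p * star (qC1 q) := by
  apply Complex.ext <;>
    simp [qC1, qC2, Quaternion.imJ_mul, Quaternion.imK_mul, Complex.mul_re, Complex.mul_im] <;> ring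

lemma qC1_star (q : ℍ) : qC1 (star q) = star (qC1 q) := by
  apply Complex.ext <;> simp [qC1]
lemma qC2_star (q : ℍ) : qC2 (star q) = - qC2 q := by
  apply Complex.ext <;> simp [qC2]

lemma qC1_real_smul (r : ℝ) (q : ℍ) : qC1 (r • q) = r • qC1 q := by
  apply Complex.ext <;> simp [qC1]
lemma qC2_real_smul (r : ℝ) (q : ℍ) : qC2 (r • q) = r • qC2 q := by
  apply Complex.ext <;> simp [qC2]

lemma eq_zero_of_qC (q : ℍ) (h1 : qC1 q = 0) (h2 : qC2 q = 0) : q = 0 :=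
  quat_ext (by simp [h1]) (by simp [h2])

@[simp] lemma qC1_real (r : ℝ) : qC1 ((r : ℝ) • (1:ℍ)) = (r:ℂ) := by
  apply Complex.ext <;> simp [qC1, Quaternion.re_one, Quaternion.imI_one]



section qfLemmas

variable {N₁ N₂ N₃ : ℕ}

@[simp] lemma qf_ll (Q : Matrix (Fin N₁) (Fin N₂) ℍ) (m n) :
    qf Q (Sum.inl m) (Sum.inl n) = qC1 (Q m n) := rfl
@[simp] lemma qf_lr (Q : Matrix (Fin N₁) (Fin N₂) ℍ) (m n) :
    qf Q (Sum.inl m) (Sum.inr n) = qC2 (Q m n) := rfl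
@[simp] lemma qf_rl (Q : Matrix (Fin N₁) (Fin N₂) ℍ) (m n) :
    qf Q (Sum.inr m) (Sum.inl n) = - star (qC2 (Q m n)) := rfl
@[simp] lemma qf_rr (Q : Matrix (Fin N₁) (Fin N₂) ℍ) (m n) :
    qf Q (Sum.inr m) (Sum.inr n) = star (qC1 (Q m n)) := rfl

lemma qC1_sum {ι : Type*} (s : Finset ι) (g : ι → ℍ) : qC1 (∑ k ∈ s, g k) = ∑ k ∈ s, qC1 (g k) :=
  map_sum qC1h g s
lemma qC2_sum {ι : Type*} (s : Finset ι) (g : ι → ℍ) : qC2 (∑ k ∈ s, g k) = ∑ k ∈ s, qC2 (g k) :=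
  map_sum qC2h g s

lemma qf_mul (A : Matrix (Fin N₁) (Fin N₂) ℍ) (B : Matrix (Fin N₂) (Fin N₃) ℍ) :
    qf (A * B) = qf A * qf B := by
  ext i j
  rcases i with i | i <;> rcases j with j | j <;>
    simp only [qf_ll, qf_lr, qf_rl, qf_rr, Matrix.mul_apply, Fintype.sum_sum_type,
      qC1_sum, qC2_sum, qC1_mul, qC2_mul, star_sum, star_sub, star_add, star_mul', star_star,
      star_neg, neg_neg, mul_neg, neg_mul, Finset.sum_sub_distrib, Finset.sum_add_distrib,
      Finset.sum_neg_distrib, sub_eq_add_neg, neg_add_rev] <;>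
  ring_nf <;> rw [add_comm]

end qfLemmas

lemma qf_conjTranspose {N₁ N₂ : ℕ} (A : Matrix (Fin N₁) (Fin N₂) ℍ) :
    qf (Aᴴ) = (qf A)ᴴ := by
  ext i j
  rcases i with i | i <;> rcases j with j | j <;>
    simp [Matrix.conjTranspose_apply, qC1_star, qC2_star]

lemma qf_ne_zero {N₁ N₂ : ℕ} {Q : Matrix (Fin N₁) (Fin N₂) ℍ} (h : Q ≠ 0) : qf Q ≠ 0 := by
  intro hf
  apply h
  apply Matrix.ext
  intro m n
  have h1 : qf Q (Sum.inl m) (Sum.inl n) = 0 := by rw [hf]; rfl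
  have h2 : qf Q (Sum.inl m) (Sum.inr n) = 0 := by rw [hf]; rfl
  rw [qf_ll] at h1; rw [qf_lr] at h2
  exact eq_zero_of_qC (Q m n) h1 h2

lemma exists_real_eigen {N : ℕ} (B : Matrix (Fin N) (Fin N) ℍ) (hB : Bᴴ = B) (h0 : B ≠ 0) :
    ∃ (t : ℝ) (w : Fin N → ℍ), t ≠ 0 ∧ w ≠ 0 ∧ B *ᵥ w = t • w := by
  have hherm : (qf B).IsHermitian := by
    rw [Matrix.IsHermitian, ← qf_conjTranspose, hB]
  obtain ⟨z, t, ht, hz, hzeq⟩ := hherm.exists_eigenvector_of_ne_zero (qf_ne_zero h0)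
  set W : Matrix (Fin N) (Fin 1) ℍ :=
    Matrix.of (fun i _ => cd (z (Sum.inl i)) (-(starRingEnd ℂ) (z (Sum.inr i)))) with hW
  have hcol : ∀ k, qf W k (Sum.inl 0) = z k := by
    rintro (i | i)
    · simp [hW]
    · simp [hW]
  have hBW : ∀ k, qf (B * W) k (Sum.inl 0) = t • z k := by
    intro k
    rw [qf_mul, Matrix.mul_apply]
    calc ∑ l, qf B k l * qf W l (Sum.inl 0) = ∑ l, qf B k l * z l := by
          simp_rw [hcol]
      _ = (qf B *ᵥ z) k := rfl
      _ = t • z k := by rw [hzeq]; rfl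
  refine ⟨t, fun i => W i 0, ht, ?_, ?_⟩
  · intro hw0
    apply hz
    funext k
    have hwz : ∀ i, W i 0 = 0 := fun i => congrFun hw0 i
    rcases k with i | i
    · have : qC1 (W i 0) = 0 := by rw [hwz i]; rfl
      simpa [hW] using this
    · have : qC2 (W i 0) = 0 := by rw [hwz i]; rfl
      have h2 : -(starRingEnd ℂ) (z (Sum.inr i)) = 0 := by simpa [hW] using this
      have := neg_eq_zero.mp h2
      simpa using congrArg (starRingEnd ℂ) this
  · funext i
    have e1 := hBW (Sum.inl i)
    have e2 := hBW (Sum.inr i)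
    rw [qf_ll] at e1
    rw [qf_rl] at e2
    have hq1 : qC1 ((B * W) i 0) = qC1 (t • W i 0) := by
      rw [e1, qC1_real_smul, hW]; simp
    have hq2 : qC2 ((B * W) i 0) = qC2 (t • W i 0) := by
      have : -star (qC2 ((B * W) i 0)) = -star (qC2 (t • W i 0)) := by
        rw [e2, qC2_real_smul, hW]
        simp [star_smul]
      have := neg_injective this
      exact star_injective this
    have : (B * W) i 0 = t • W i 0 := quat_ext hq1 hq2
    calc (B *ᵥ fun i => W i 0) i = (B * W) i 0 := by
          simp [Matrix.mulVec, Matrix.mul_apply, dotProduct]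
      _ = t • W i 0 := this
      _ = (t • fun i => W i 0) i := rfl

lemma coe_sum {ι : Type*} (s : Finset ι) (f : ι → ℝ) :
    ((∑ i ∈ s, f i : ℝ) : ℍ) = ∑ i ∈ s, ((f i : ℝ) : ℍ) := by
  rw [← Quaternion.algebraMap_def]
  exact map_sum (algebraMap ℝ (Quaternion ℝ)) f s

/-! ### Quaternionic dot product -/

def dotp {N : ℕ} (x y : Fin N → ℍ) : ℍ := ∑ i, star (x i) * y i

lemma dotp_smul_left {N : ℕ} (r : ℝ) (x y : Fin N → ℍ) :
    dotp (r • x) y = r • dotp x y := by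
  simp [dotp, Finset.smul_sum, star_smul, smul_mul_assoc]

lemma dotp_smul_right {N : ℕ} (r : ℝ) (x y : Fin N → ℍ) :
    dotp x (r • y) = r • dotp x y := by
  simp [dotp, Finset.smul_sum, mul_smul_comm]

lemma dotp_self {N : ℕ} (x : Fin N → ℍ) :
    dotp x x = ((∑ i, Quaternion.normSq (x i) : ℝ) : ℍ) := by
  simp [dotp, Quaternion.star_mul_self, coe_sum]

lemma dotp_self_nonneg_re {N : ℕ} (x : Fin N → ℍ) : 0 ≤ ∑ i, Quaternion.normSq (x i) :=
  Finset.sum_nonneg fun i _ => Quaternion.normSq_nonneg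

lemma dotp_self_eq_zero {N : ℕ} {x : Fin N → ℍ} (h : dotp x x = 0) : x = 0 := by
  rw [dotp_self] at h
  have h0 : (∑ i, Quaternion.normSq (x i) : ℝ) = 0 := by
    rw [← Quaternion.coe_zero] at h
    exact Quaternion.coe_injective h
  funext i
  have := (Finset.sum_eq_zero_iff_of_nonneg
    (fun i _ => Quaternion.normSq_nonneg (a := x i))).mp h0 i (Finset.mem_univ i)
  simpa [Quaternion.normSq_eq_zero] using this

lemma dotp_ne_zero_re {N : ℕ} {x : Fin N → ℍ} (h : x ≠ 0) :
    0 < ∑ i, Quaternion.normSq (x i) := by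
  rcases lt_or_eq_of_le (dotp_self_nonneg_re x) with h' | h'
  · exact h'
  · exfalso; exact h (dotp_self_eq_zero (by rw [dotp_self, ← h']; simp))

lemma dotp_mulVec_left {N M : ℕ} (A : Matrix (Fin N) (Fin M) ℍ) (x : Fin M → ℍ)
    (y : Fin N → ℍ) : dotp (A *ᵥ x) y = dotp x (Aᴴ *ᵥ y) := by
  simp only [dotp, Matrix.mulVec, dotProduct, Matrix.conjTranspose_apply,
    star_sum, StarMul.star_mul, Finset.sum_mul, Finset.mul_sum]
  rw [Finset.sum_comm]
  refine Finset.sum_congr rfl fun i _ => Finset.sum_congr rfl fun j _ => ?_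
  rw [mul_assoc]

/-! ### Existence of a singular pair -/

lemma exists_sing_pair {n m : ℕ} (Q : Matrix (Fin n) (Fin m) ℍ) (hQ : Q ≠ 0) :
    ∃ (σ : ℝ) (u : Fin n → ℍ) (v : Fin m → ℍ), 0 < σ ∧ dotp u u = 1 ∧ dotp v v = 1 ∧
      Q *ᵥ v = σ • u ∧ Qᴴ *ᵥ u = σ • v := by
  set B := Qᴴ * Q with hBdef
  have hBH : Bᴴ = B := by
    rw [hBdef, Matrix.conjTranspose_mul, Matrix.conjTranspose_conjTranspose]
  have hB0 : B ≠ 0 := by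
    intro hB
    apply hQ
    apply Matrix.ext; intro i j
    have hdiag : B j j = 0 := by rw [hB]; rfl
    have : (∑ k, Quaternion.normSq (Q k j) : ℝ) = (0 : ℍ) := by
      rw [← hdiag, hBdef, Matrix.mul_apply]
      simp [Matrix.conjTranspose_apply, Quaternion.star_mul_self, coe_sum]
    have h0 : (∑ k, Quaternion.normSq (Q k j) : ℝ) = 0 := by
      rw [← Quaternion.coe_zero] at this
      exact Quaternion.coe_injective this
    have := (Finset.sum_eq_zero_iff_of_nonneg
      (fun k _ => Quaternion.normSq_nonneg (a := Q k j))).mp h0 i (Finset.mem_univ i)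
    simpa [Quaternion.normSq_eq_zero] using this
  obtain ⟨t, w, ht, hw, heig⟩ := exists_real_eigen B hBH hB0
  -- positivity of t
  have hBw : B *ᵥ w = Qᴴ *ᵥ (Q *ᵥ w) := by rw [hBdef, ← Matrix.mulVec_mulVec]
  have key : dotp w (B *ᵥ w) = dotp (Q *ᵥ w) (Q *ᵥ w) := by
    rw [hBw, ← dotp_mulVec_left]
  have hrho : 0 < ∑ i, Quaternion.normSq (w i) := dotp_ne_zero_re hw
  have hkey2 : (t * (∑ i, Quaternion.normSq (w i) : ℝ) : ℝ) =
      (∑ i, Quaternion.normSq ((Q *ᵥ w) i) : ℝ) := by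
    have h1 : dotp w (B *ᵥ w) = ((t * ∑ i, Quaternion.normSq (w i) : ℝ) : ℍ) := by
      rw [heig, dotp_smul_right, dotp_self, Quaternion.smul_coe]
    rw [key, dotp_self] at h1
    exact Quaternion.coe_injective h1.symm
  have htpos : 0 < t := by
    rcases lt_trichotomy t 0 with hlt | heq | hgt
    · exfalso
      have h2 : 0 ≤ t * (∑ i, Quaternion.normSq (w i) : ℝ) := by
        rw [hkey2]; exact dotp_self_nonneg_re _
      exact absurd (mul_neg_of_neg_of_pos hlt hrho) (not_lt.mpr h2)
    · exact absurd heq ht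
    · exact hgt
  -- normalize
  set ρ : ℝ := ∑ i, Quaternion.normSq (w i) with hρ
  set σ : ℝ := Real.sqrt t with hσ
  have hσpos : 0 < σ := Real.sqrt_pos.mpr htpos
  have hσsq : σ * σ = t := Real.mul_self_sqrt htpos.le
  set v : Fin m → ℍ := (Real.sqrt ρ)⁻¹ • w with hv
  have hρpos : 0 < Real.sqrt ρ := Real.sqrt_pos.mpr hrho
  have hvv : dotp v v = 1 := by
    rw [hv, dotp_smul_left, dotp_smul_right, dotp_self, smul_smul, Quaternion.smul_coe,
      ← hρ]
    rw [← Real.sqrt_mul_self hrho.le]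
    field_simp
    rw [Real.sq_sqrt (Real.sqrt_nonneg _), Real.sqrt_sq hrho.le, div_self hrho.ne']
    exact Quaternion.coe_one
  have hBv : B *ᵥ v = t • v := by
    rw [hv, Matrix.mulVec_smul, heig, smul_comm]
  set u : Fin n → ℍ := σ⁻¹ • (Q *ᵥ v) with hu
  have hQv : Q *ᵥ v = σ • u := by
    rw [hu, smul_smul, mul_inv_cancel₀ hσpos.ne', one_smul]
  have hQHu : Qᴴ *ᵥ u = σ • v := by
    rw [hu, Matrix.mulVec_smul, Matrix.mulVec_mulVec, ← hBdef, hBv, smul_smul]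
    rw [show σ⁻¹ * t = σ by rw [← hσsq]; field_simp]
  have hdQv : dotp (Q *ᵥ v) (Q *ᵥ v) = ((t : ℝ) : ℍ) := by
    rw [dotp_mulVec_left, Matrix.mulVec_mulVec, ← hBdef, hBv, dotp_smul_right, hvv,
      ← Quaternion.coe_one, Quaternion.smul_coe, mul_one]
  have huu : dotp u u = 1 := by
    rw [hu, dotp_smul_left, dotp_smul_right, hdQv, Quaternion.smul_coe, Quaternion.smul_coe]
    rw [show σ⁻¹ * (σ⁻¹ * t) = 1 by rw [← hσsq]; field_simp]
    exact Quaternion.coe_one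
  exact ⟨σ, u, v, hσpos, huu, hvv, hQv, hQHu⟩

/-! ### unitary basics -/

lemma qUnitary_one {N : ℕ} : qUnitary (1 : Matrix (Fin N) (Fin N) ℍ) := by
  constructor <;> simp [qUnitary]

lemma qUnitary_mul {N : ℕ} {A B : Matrix (Fin N) (Fin N) ℍ} (hA : qUnitary A)
    (hB : qUnitary B) : qUnitary (A * B) := by
  constructor
  · rw [Matrix.conjTranspose_mul, mul_assoc, ← mul_assoc B, hB.1, one_mul, hA.1]
  · rw [Matrix.conjTranspose_mul, mul_assoc, ← mul_assoc Aᴴ, hA.2, one_mul, hB.2]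

/-! ### dot product: extra bilinearity -/

lemma dotp_sub_left {N : ℕ} (x y z : Fin N → ℍ) :
    dotp (x - y) z = dotp x z - dotp y z := by
  simp [dotp, sub_mul, Finset.sum_sub_distrib]

lemma dotp_sub_right {N : ℕ} (x y z : Fin N → ℍ) :
    dotp x (y - z) = dotp x y - dotp x z := by
  simp [dotp, mul_sub, Finset.sum_sub_distrib]

lemma dotp_single_left {N : ℕ} (a : Fin N) (y : Fin N → ℍ) :
    dotp (Pi.single a 1) y = y a := by
  simp only [dotp]
  rw [Finset.sum_eq_single a]
  · simp
  · intro b _ hb; simp [Pi.single_apply, hb]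
  · simp

lemma dotp_single_right {N : ℕ} (x : Fin N → ℍ) (a : Fin N) :
    dotp x (Pi.single a 1) = star (x a) := by
  simp only [dotp]
  rw [Finset.sum_eq_single a]
  · simp
  · intro b _ hb; simp [Pi.single_apply, hb]
  · simp

lemma star_real_smul (r : ℝ) (q : ℍ) : star (r • q) = r • star q := by
  apply QuaternionAlgebra.ext <;> simp

lemma conjT_real_smul {N M : ℕ} (c : ℝ) (A : Matrix (Fin N) (Fin M) ℍ) :
    (c • A)ᴴ = c • Aᴴ := by
  apply Matrix.ext; intro i j
  simp [Matrix.conjTranspose_apply, star_real_smul]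

/-! ### Householder -/

lemma outer_mul_outer {N : ℕ} (u : Fin N → ℍ) :
    Matrix.vecMulVec u (star u) * Matrix.vecMulVec u (star u) =
      (∑ k, Quaternion.normSq (u k)) • Matrix.vecMulVec u (star u) := by
  apply Matrix.ext; intro i j
  simp only [Matrix.mul_apply, Matrix.vecMulVec_apply, Matrix.smul_apply, Pi.star_apply]
  calc ∑ k, u i * star (u k) * (u k * star (u j))
      = ∑ k, u i * (((Quaternion.normSq (u k) : ℝ) : ℍ) * star (u j)) := by
        refine Finset.sum_congr rfl fun k _ => ?_
        rw [mul_assoc, ← mul_assoc (star (u k)), Quaternion.star_mul_self]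
    _ = u i * (((∑ k, Quaternion.normSq (u k) : ℝ) : ℍ) * star (u j)) := by
        rw [← Finset.mul_sum, ← Finset.sum_mul, coe_sum]
    _ = (∑ k, Quaternion.normSq (u k)) • (u i * star (u j)) := by
        rw [Quaternion.coe_mul_eq_smul, mul_smul_comm]

lemma outer_herm {N : ℕ} (u : Fin N → ℍ) :
    (Matrix.vecMulVec u (star u))ᴴ = Matrix.vecMulVec u (star u) := by
  apply Matrix.ext; intro i j
  simp [Matrix.conjTranspose_apply, Matrix.vecMulVec_apply, StarMul.star_mul]

lemma exists_unitary_col {n : ℕ} (v : Fin (n+1) → ℍ) (hv : dotp v v = 1) :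
    ∃ U : Matrix (Fin (n+1)) (Fin (n+1)) ℍ, qUnitary U ∧ ∀ i, U i 0 = v i := by
  classical
  set ω : ℍ := if v 0 = 0 then 1 else (‖v 0‖)⁻¹ • v 0 with hω
  have hω1 : ω * star ω = 1 := by
    rw [hω]
    split_ifs with h
    · simp
    · have hn : ‖v 0‖ ≠ 0 := norm_ne_zero_iff.mpr h
      rw [star_real_smul, smul_mul_assoc, mul_smul_comm, Quaternion.self_mul_star, smul_smul,
        Quaternion.smul_coe, Quaternion.normSq_eq_norm_mul_self]
      rw [show (‖v 0‖)⁻¹ * (‖v 0‖)⁻¹ * (‖v 0‖ * ‖v 0‖) = 1 by field_simp]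
      exact Quaternion.coe_one
  have hω2 : star ω * ω = 1 := by
    rw [hω]
    split_ifs with h
    · simp
    · have hn : ‖v 0‖ ≠ 0 := norm_ne_zero_iff.mpr h
      rw [star_real_smul, smul_mul_assoc, mul_smul_comm, Quaternion.star_mul_self, smul_smul,
        Quaternion.smul_coe, Quaternion.normSq_eq_norm_mul_self]
      rw [show (‖v 0‖)⁻¹ * (‖v 0‖)⁻¹ * (‖v 0‖ * ‖v 0‖) = 1 by field_simp]
      exact Quaternion.coe_one
  set w : Fin (n+1) → ℍ := fun i => v i * star ω with hwdef
  have hviw : ∀ i, w i * ω = v i := by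
    intro i
    rw [hwdef]
    show v i * star ω * ω = v i
    rw [mul_assoc, hω2, mul_one]
  have hw0 : w 0 = ((‖v 0‖ : ℝ) : ℍ) := by
    rw [hwdef, hω]
    split_ifs with h
    · simp [h]
    · show v 0 * star ((‖v 0‖)⁻¹ • v 0) = _
      have hn : ‖v 0‖ ≠ 0 := norm_ne_zero_iff.mpr h
      rw [star_real_smul, mul_smul_comm, Quaternion.self_mul_star, Quaternion.smul_coe,
        Quaternion.normSq_eq_norm_mul_self]
      congr 1
      field_simp
  have hww : dotp w w = 1 := by
    show ∑ i, star (w i) * w i = 1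
    calc ∑ i, star (w i) * w i = ∑ i, ω * (star (v i) * v i * star ω) := by
          refine Finset.sum_congr rfl fun i _ => ?_
          rw [hwdef]
          show star (v i * star ω) * (v i * star ω) = _
          rw [StarMul.star_mul, star_star]
          simp only [mul_assoc]
      _ = ω * ((∑ i, star (v i) * v i) * star ω) := by
          rw [← Finset.mul_sum, ← Finset.sum_mul]
      _ = 1 := by rw [show (∑ i, star (v i) * v i) = dotp v v from rfl, hv, one_mul, hω1]
  set e : Fin (n+1) → ℍ := Pi.single 0 1 with he
  set u : Fin (n+1) → ℍ := w - e with hu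
  set r : ℝ := 1 - ‖v 0‖ with hr
  have hu0 : u 0 = ((-r : ℝ) : ℍ) := by
    rw [hu]
    show w 0 - e 0 = _
    rw [hw0, he, Pi.single_eq_same, ← Quaternion.coe_one, ← Quaternion.coe_sub]
    congr 1
    rw [hr]; ring
  have huu : dotp u u = ((2 * r : ℝ) : ℍ) := by
    rw [hu, dotp_sub_left, dotp_sub_right, dotp_sub_right, hww, he,
      dotp_single_left, dotp_single_right, dotp_single_right, hw0, Quaternion.star_coe]
    simp only [Pi.single_eq_same, star_one]
    rw [← Quaternion.coe_one, ← Quaternion.coe_sub, ← Quaternion.coe_sub, ← Quaternion.coe_sub]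
    congr 1
    rw [hr]; ring
  set c : ℝ := if r = 0 then 0 else r⁻¹ with hc
  set O : Matrix (Fin (n+1)) (Fin (n+1)) ℍ := Matrix.vecMulVec u (star u) with hO
  set H : Matrix (Fin (n+1)) (Fin (n+1)) ℍ := 1 - c • O with hH
  have hHherm : Hᴴ = H := by
    rw [hH, Matrix.conjTranspose_sub, Matrix.conjTranspose_one, conjT_real_smul,
      hO, outer_herm]
  have hHH : H * H = 1 := by
    by_cases hr0 : r = 0
    · have hu0' : u = 0 := by
        apply dotp_self_eq_zero
        rw [huu, hr0]
        norm_num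
      have : O = 0 := by
        rw [hO, hu0']
        apply Matrix.ext; intro i j
        simp [Matrix.vecMulVec_apply]
      rw [hH, this]
      norm_num
    · have hs : (∑ k, Quaternion.normSq (u k)) = 2 * r := by
        apply Quaternion.coe_injective
        rw [← dotp_self, huu]
      have hOO : O * O = (2 * r) • O := by rw [hO, outer_mul_outer, hs]
      have hcr : c = r⁻¹ := by rw [hc, if_neg hr0]
      rw [hH, sub_mul, mul_sub, mul_sub]
      simp only [one_mul, mul_one]
      rw [Matrix.smul_mul, Matrix.mul_smul, hOO, smul_smul, smul_smul]
      rw [show c * c * (2 * r) = 2 * c by rw [hcr]; field_simp]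
      rw [two_mul, add_smul]
      abel1
  have hHcol : ∀ i, H i 0 = w i := by
    intro i
    by_cases hr0 : r = 0
    · have hu0' : u = 0 := by
        apply dotp_self_eq_zero
        rw [huu, hr0]; norm_num
      have hwe : w = e := by
        rw [hu] at hu0'
        exact sub_eq_zero.mp hu0' 
      rw [hH]
      have hO0 : O i 0 = 0 := by
        rw [hO, Matrix.vecMulVec_apply]
        rw [show u = 0 from hu0']
        simp
      simp only [Matrix.sub_apply, Matrix.smul_apply, hO0, smul_zero, sub_zero]
      rw [hwe, he, Matrix.one_apply, Pi.single_apply]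
    · have hcr : c = r⁻¹ := by rw [hc, if_neg hr0]
      rw [hH]
      simp only [Matrix.sub_apply, Matrix.smul_apply, hO, Matrix.vecMulVec_apply,
        Pi.star_apply]
      rw [hu0, Quaternion.star_coe, Quaternion.mul_coe_eq_smul, smul_smul]
      rw [show c * -r = -1 by rw [hcr]; field_simp]
      have : w i = e i + u i := by rw [hu]; simp
      rw [this, Matrix.one_apply, he, Pi.single_apply]
      simp [eq_comm, sub_eq_add_neg]
  set D : Matrix (Fin (n+1)) (Fin (n+1)) ℍ :=
    Matrix.diagonal (fun i => if i = 0 then ω else 1) with hD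
  have hDu : qUnitary D := by
    have h1 : D * Dᴴ = 1 := by
      rw [hD, Matrix.diagonal_conjTranspose, Matrix.diagonal_mul_diagonal]
      apply Matrix.ext; intro i j
      rcases eq_or_ne i j with rfl | hij
      · rw [Matrix.diagonal_apply_eq, Matrix.one_apply_eq]
        rcases eq_or_ne i 0 with rfl | hi0
        · simpa [Function.comp] using hω1
        · simp [Function.comp, hi0]
      · rw [Matrix.diagonal_apply_ne _ hij, Matrix.one_apply_ne hij]
    have h2 : Dᴴ * D = 1 := by
      rw [hD, Matrix.diagonal_conjTranspose, Matrix.diagonal_mul_diagonal]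
      apply Matrix.ext; intro i j
      rcases eq_or_ne i j with rfl | hij
      · rw [Matrix.diagonal_apply_eq, Matrix.one_apply_eq]
        rcases eq_or_ne i 0 with rfl | hi0
        · simpa [Function.comp] using hω2
        · simp [Function.comp, hi0]
      · rw [Matrix.diagonal_apply_ne _ hij, Matrix.one_apply_ne hij]
    exact ⟨h1, h2⟩
  have hHu : qUnitary H := ⟨by rw [hHherm, hHH], by rw [hHherm, hHH]⟩
  refine ⟨H * D, qUnitary_mul hHu hDu, fun i => ?_⟩
  rw [hD, Matrix.mul_diagonal, if_pos (rfl : (0 : Fin (n+1)) = 0), hHcol i, hviw i]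

/-! ### reindexing -/

def fe (k : ℕ) : Fin 1 ⊕ Fin k ≃ Fin (k + 1) :=
  finSumFinEquiv.trans (finCongr (Nat.add_comm 1 k))

lemma fe_inl (k : ℕ) (x : Fin 1) : fe k (Sum.inl x) = 0 := by
  apply Fin.ext
  simp [fe, finSumFinEquiv, Fin.ext_iff]

lemma fe_inr (k : ℕ) (i : Fin k) : fe k (Sum.inr i) = i.succ := by
  apply Fin.ext
  simp [fe, finSumFinEquiv, Fin.ext_iff]

lemma qUnitary_reindex {α : Type*} [Fintype α] [DecidableEq α] {N : ℕ} (e : α ≃ Fin N)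
    (A : Matrix α α ℍ) (h1 : A * Aᴴ = 1) (h2 : Aᴴ * A = 1) :
    qUnitary (Matrix.reindex e e A) := by
  constructor
  · rw [Matrix.reindex_apply, Matrix.conjTranspose_submatrix,
      Matrix.submatrix_mul_equiv, h1, Matrix.submatrix_one_equiv]
  · rw [Matrix.reindex_apply, Matrix.conjTranspose_submatrix,
      Matrix.submatrix_mul_equiv, h2, Matrix.submatrix_one_equiv]

/-! ### main induction -/

lemma qsvd_aux : ∀ (N₁ N₂ : ℕ) (Q : Matrix (Fin N₁) (Fin N₂) ℍ),
    ∃ (U : Matrix (Fin N₁) (Fin N₁) ℍ) (Λ : Matrix (Fin N₁) (Fin N₂) ℝ)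
      (V : Matrix (Fin N₂) (Fin N₂) ℍ),
      qUnitary U ∧ qUnitary V ∧ recDiagNonneg Λ ∧ Q = U * rToQ Λ * Vᴴ := by
  intro N₁
  induction N₁ with
  | zero =>
    intro N₂ Q
    refine ⟨1, 0, 1, qUnitary_one, qUnitary_one, ⟨fun m _ _ => rfl, fun m _ => le_refl _⟩, ?_⟩
    exact Matrix.ext fun i => i.elim0
  | succ n ih =>
    intro N₂ Q
    by_cases hQ0 : Q = 0
    · refine ⟨1, 0, 1, qUnitary_one, qUnitary_one,
        ⟨fun _ _ _ => rfl, fun _ _ => le_refl _⟩, ?_⟩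
      rw [hQ0]
      apply Matrix.ext; intro i j
      simp [rToQ]
    rcases N₂ with _ | m
    · exact absurd (Matrix.ext fun i (j : Fin 0) => j.elim0) hQ0
    obtain ⟨σ, u, v, hσpos, huu, hvv, hQv, hQHu⟩ := exists_sing_pair Q hQ0
    obtain ⟨U₁, hU₁, hU₁col⟩ := exists_unitary_col u huu
    obtain ⟨V₁, hV₁, hV₁col⟩ := exists_unitary_col v hvv
    set P : Matrix (Fin (n+1)) (Fin (m+1)) ℍ := U₁ᴴ * Q * V₁ with hPdef
    -- column facts
    have hU1u : U₁ᴴ *ᵥ u = fun k => (1 : Matrix (Fin (n+1)) (Fin (n+1)) ℍ) k 0 := by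
      funext k
      rw [← hU₁.2, Matrix.mul_apply]
      show ∑ l, star (U₁ l k) * u l = _
      exact Finset.sum_congr rfl fun l _ => by
        rw [← hU₁col l]; rfl
    have hV1v : V₁ᴴ *ᵥ v = fun k => (1 : Matrix (Fin (m+1)) (Fin (m+1)) ℍ) k 0 := by
      funext k
      rw [← hV₁.2, Matrix.mul_apply]
      show ∑ l, star (V₁ l k) * v l = _
      exact Finset.sum_congr rfl fun l _ => by
        rw [← hV₁col l]; rfl
    have hPcol : ∀ i, P i 0 = σ • (1 : Matrix (Fin (n+1)) (Fin (n+1)) ℍ) i 0 := by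
      intro i
      have h1 : P i 0 = ((U₁ᴴ * Q) *ᵥ v) i := by
        rw [hPdef, Matrix.mul_apply]
        show _ = ∑ l, (U₁ᴴ * Q) i l * v l
        exact Finset.sum_congr rfl fun l _ => by rw [← hV₁col l]
      rw [h1, ← Matrix.mulVec_mulVec, hQv, Matrix.mulVec_smul, hU1u]
      rfl
    have hProw : ∀ j, P 0 j = σ • (1 : Matrix (Fin (m+1)) (Fin (m+1)) ℍ) j 0 := by
      intro j
      have hPH : Pᴴ = V₁ᴴ * Qᴴ * U₁ := by
        rw [hPdef, Matrix.conjTranspose_mul, Matrix.conjTranspose_mul,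
          Matrix.conjTranspose_conjTranspose]
        exact (Matrix.mul_assoc V₁ᴴ Qᴴ U₁).symm
      have h1 : Pᴴ j 0 = ((V₁ᴴ * Qᴴ) *ᵥ u) j := by
        rw [hPH, Matrix.mul_apply]
        show _ = ∑ l, (V₁ᴴ * Qᴴ) j l * u l
        exact Finset.sum_congr rfl fun l _ => by rw [← hU₁col l]
      have h2 : star (P 0 j) = σ • (1 : Matrix (Fin (m+1)) (Fin (m+1)) ℍ) j 0 := by
        rw [← Matrix.conjTranspose_apply, h1, ← Matrix.mulVec_mulVec, hQHu,
          Matrix.mulVec_smul, hV1v]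
        rfl
      have := congrArg star h2
      rw [star_star, star_real_smul] at this
      rw [this]
      congr 1
      rcases eq_or_ne j 0 with rfl | hj
      · rw [Matrix.one_apply_eq]; exact star_one _
      · rw [Matrix.one_apply_ne hj]; exact star_zero _
    -- deflated matrix
    set Q' : Matrix (Fin n) (Fin m) ℍ := Matrix.of (fun i j => P i.succ j.succ) with hQ'
    obtain ⟨U', Λ', V', hU', hV', hΛ', hQeq'⟩ := ih m Q'
    -- blocks
    set A11 : Matrix (Fin 1) (Fin 1) ℍ := Matrix.of (fun _ _ => ((σ : ℝ) : ℍ)) with hA11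
    set F : Matrix (Fin 1 ⊕ Fin n) (Fin 1 ⊕ Fin m) ℍ := Matrix.fromBlocks A11 0 0 Q' with hF
    have Psub : P.submatrix (fe n) (fe m) = F := by
      apply Matrix.ext
      rintro (p | p) (q | q)
      · rw [Matrix.submatrix_apply, fe_inl, fe_inl, hPcol 0, Matrix.one_apply_eq]
        show σ • (1:ℍ) = A11 p q
        rw [hA11]
        show σ • (1:ℍ) = ((σ : ℝ) : ℍ)
        rw [← Quaternion.coe_one, Quaternion.smul_coe, mul_one]
      · rw [Matrix.submatrix_apply, fe_inl, fe_inr, hProw q.succ,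
          Matrix.one_apply_ne (Fin.succ_ne_zero q)]
        show σ • (0:ℍ) = _
        rw [smul_zero]
        rfl
      · rw [Matrix.submatrix_apply, fe_inr, fe_inl, hPcol p.succ,
          Matrix.one_apply_ne (Fin.succ_ne_zero p)]
        show σ • (0:ℍ) = _
        rw [smul_zero]
        rfl
      · rw [Matrix.submatrix_apply, fe_inr, fe_inr]
        rfl
    have hP : P = Matrix.reindex (fe n) (fe m) F := by
      rw [Matrix.reindex_apply, ← Psub, Matrix.submatrix_submatrix, Equiv.self_comp_symm,
        Equiv.self_comp_symm, Matrix.submatrix_id_id]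
    -- assemble
    set X : Matrix (Fin 1 ⊕ Fin n) (Fin 1 ⊕ Fin n) ℍ :=
      Matrix.fromBlocks 1 0 0 U' with hX
    set Z : Matrix (Fin 1 ⊕ Fin m) (Fin 1 ⊕ Fin m) ℍ :=
      Matrix.fromBlocks 1 0 0 V' with hZ
    set Λ0 : Matrix (Fin 1 ⊕ Fin n) (Fin 1 ⊕ Fin m) ℝ :=
      Matrix.fromBlocks (Matrix.of (fun _ _ => σ)) 0 0 Λ' with hΛ0
    have hXu : qUnitary (Matrix.reindex (fe n) (fe n) X) := by
      apply qUnitary_reindex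
      · rw [hX, Matrix.fromBlocks_conjTranspose, Matrix.fromBlocks_multiply]
        simp [hU'.1, Matrix.fromBlocks_one]
      · rw [hX, Matrix.fromBlocks_conjTranspose, Matrix.fromBlocks_multiply]
        simp [hU'.2, Matrix.fromBlocks_one]
    have hZu : qUnitary (Matrix.reindex (fe m) (fe m) Z) := by
      apply qUnitary_reindex
      · rw [hZ, Matrix.fromBlocks_conjTranspose, Matrix.fromBlocks_multiply]
        simp [hV'.1, Matrix.fromBlocks_one]
      · rw [hZ, Matrix.fromBlocks_conjTranspose, Matrix.fromBlocks_multiply]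
        simp [hV'.2, Matrix.fromBlocks_one]
    have hYfact : F = X * Matrix.fromBlocks A11 0 0 (rToQ Λ') * Zᴴ := by
      rw [hX, hZ, Matrix.fromBlocks_conjTranspose, Matrix.fromBlocks_multiply,
        Matrix.fromBlocks_multiply]
      rw [hF]
      congr 1 <;> try simp
      · simp [hQeq']
    have hrToQ : rToQ (Matrix.reindex (fe n) (fe m) Λ0) =
        Matrix.reindex (fe n) (fe m) (Matrix.fromBlocks A11 0 0 (rToQ Λ')) := by
      apply Matrix.ext; intro i j
      rw [rToQ, Matrix.reindex_apply, Matrix.reindex_apply, Matrix.map_apply,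
        Matrix.submatrix_apply, Matrix.submatrix_apply]
      rcases (fe n).symm i with p | p <;> rcases (fe m).symm j with q | q <;>
        simp [hΛ0, hA11, rToQ, Quaternion.algebraMap_def]
    refine ⟨U₁ * Matrix.reindex (fe n) (fe n) X, Matrix.reindex (fe n) (fe m) Λ0,
      V₁ * Matrix.reindex (fe m) (fe m) Z, qUnitary_mul hU₁ hXu, qUnitary_mul hV₁ hZu, ?_, ?_⟩
    · constructor
      · intro i j hij
        obtain ⟨p, rfl⟩ := (fe n).surjective i
        obtain ⟨q, rfl⟩ := (fe m).surjective j
        rw [Matrix.reindex_apply, Matrix.submatrix_apply, Equiv.symm_apply_apply,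
          Equiv.symm_apply_apply]
        rcases p with p | p <;> rcases q with q | q
        · exfalso; apply hij
          rw [fe_inl, fe_inl]
          rfl
        · rfl
        · rfl
        · rw [fe_inr, fe_inr] at hij
          have : (p : ℕ) ≠ (q : ℕ) := by
            simpa [Fin.val_succ] using hij
          exact hΛ'.1 p q this
      · intro i j
        obtain ⟨p, rfl⟩ := (fe n).surjective i
        obtain ⟨q, rfl⟩ := (fe m).surjective j
        rw [Matrix.reindex_apply, Matrix.submatrix_apply, Equiv.symm_apply_apply,
          Equiv.symm_apply_apply]
        rcases p with p | p <;> rcases q with q | q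
        · exact hσpos.le
        · exact le_refl _
        · exact le_refl _
        · exact hΛ'.2 p q
    · -- Q = U * Λ * Vᴴ
      have hQP : Q = U₁ * P * V₁ᴴ := by
        rw [hPdef]
        rw [show U₁ * (U₁ᴴ * Q * V₁) * V₁ᴴ = (U₁ * U₁ᴴ) * Q * (V₁ * V₁ᴴ) by
          simp only [Matrix.mul_assoc]]
        rw [hU₁.1, hV₁.1, Matrix.one_mul, Matrix.mul_one]
      have hcomb : (Matrix.reindex (fe n) (fe n) X) *
          (Matrix.reindex (fe n) (fe m) (Matrix.fromBlocks A11 0 0 (rToQ Λ'))) *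
          ((Matrix.reindex (fe m) (fe m) Z)ᴴ) =
          Matrix.reindex (fe n) (fe m) (X * Matrix.fromBlocks A11 0 0 (rToQ Λ') * Zᴴ) := by
        rw [Matrix.reindex_apply, Matrix.reindex_apply, Matrix.reindex_apply,
          Matrix.reindex_apply, Matrix.conjTranspose_submatrix,
          Matrix.submatrix_mul_equiv, Matrix.submatrix_mul_equiv]
      rw [Matrix.conjTranspose_mul, hrToQ]
      calc Q = U₁ * P * V₁ᴴ := hQP
        _ = U₁ * Matrix.reindex (fe n) (fe m)
              (X * Matrix.fromBlocks A11 0 0 (rToQ Λ') * Zᴴ) * V₁ᴴ := by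
            rw [hP, hYfact]
        _ = _ := by
            rw [← hcomb]
            simp only [Matrix.mul_assoc]

end QSVDaux

/-- Every quaternion matrix admits a QSVD. -/
theorem qsvd_exists {N₁ N₂ : ℕ} (Q : Matrix (Fin N₁) (Fin N₂) (Quaternion ℝ)) :
    ∃ (U : Matrix (Fin N₁) (Fin N₁) (Quaternion ℝ))
      (Λ : Matrix (Fin N₁) (Fin N₂) ℝ)
      (V : Matrix (Fin N₂) (Fin N₂) (Quaternion ℝ)),
      IsQSVD Q U Λ V := by
  obtain ⟨U, L, V, h1, h2, h3, h4⟩ := QSVDaux.qsvd_aux N₁ N₂ Q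
  exact ⟨U, L, V, h1, h2, h3, h4⟩
end
end

section
/- Let Q ∈ ℍ^{N₁×N₂} have a QSVD Q = U Λ Vᴴ with U, V unitary quaternion matrices and Λ ∈ ℝ^{N₁×N₂} rectangular diagonal with nonnegative diagonal entries σ₁, …, σ_{min(N₁,N₂)} (extended by zeros to length N₂ if N₂ > N₁). Then the multiset of eigenvalues, counted with multiplicity, of the Hermitian positive semidefinite complex matrix f(Q)ᴴ f(Q) ∈ ℂ^{2N₂×2N₂} consists exactly of the values σ_k², k = 1, …, N₂, each appearing twice. In particular, each singular value of Q appears as a singular value of f(Q) with multiplicity two. -/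
open Matrix

noncomputable section

open Polynomial

noncomputable section

lemma qC1_add (p q : Quaternion ℝ) : qC1 (p + q) = qC1 p + qC1 q := by
  apply Complex.ext <;> simp [qC1, Complex.add_re, Complex.add_im]

lemma qC2_add (p q : Quaternion ℝ) : qC2 (p + q) = qC2 p + qC2 q := by
  apply Complex.ext <;> simp [qC2]

lemma qC1_zero : qC1 0 = 0 := by apply Complex.ext <;> simp [qC1] <;> rfl
lemma qC2_zero : qC2 0 = 0 := by apply Complex.ext <;> simp [qC2] <;> rfl

lemma qC1_mul (p q : Quaternion ℝ) :
    qC1 (p * q) = qC1 p * qC1 q - qC2 p * star (qC2 q) := by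
  apply Complex.ext <;>
    simp [qC1, qC2, Complex.mul_re, Complex.mul_im] <;> ring

lemma qC2_mul (p q : Quaternion ℝ) :
    qC2 (p * q) = qC1 p * qC2 q + qC2 p * star (qC1 q) := by
  apply Complex.ext <;>
    simp [qC1, qC2, Complex.mul_re, Complex.mul_im] <;> ring

lemma qC1_star (p : Quaternion ℝ) : qC1 (star p) = star (qC1 p) := by
  apply Complex.ext <;> simp [qC1]

lemma qC2_star (p : Quaternion ℝ) : qC2 (star p) = -qC2 p := by
  apply Complex.ext <;> simp [qC2]

lemma qC1_one : qC1 1 = 1 := by apply Complex.ext <;> simp [qC1] <;> rfl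
lemma qC2_one : qC2 1 = 0 := by apply Complex.ext <;> simp [qC2] <;> rfl

lemma qC1_real (r : ℝ) : qC1 (algebraMap ℝ (Quaternion ℝ) r) = (r : ℂ) := by
  apply Complex.ext <;> simp [qC1]
lemma qC2_real (r : ℝ) : qC2 (algebraMap ℝ (Quaternion ℝ) r) = 0 := by
  apply Complex.ext <;> simp [qC2]
lemma qC1_coe (r : ℝ) : qC1 (r : Quaternion ℝ) = (r : ℂ) := by
  apply Complex.ext <;> simp [qC1]
lemma qC2_coe (r : ℝ) : qC2 (r : Quaternion ℝ) = 0 := by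
  apply Complex.ext <;> simp [qC2]


def qC1AH : Quaternion ℝ →+ ℂ := ⟨⟨qC1, qC1_zero⟩, qC1_add⟩
def qC2AH : Quaternion ℝ →+ ℂ := ⟨⟨qC2, qC2_zero⟩, qC2_add⟩

lemma qC1_sum {ι : Type*} (s : Finset ι) (f : ι → Quaternion ℝ) :
    qC1 (∑ i ∈ s, f i) = ∑ i ∈ s, qC1 (f i) := map_sum qC1AH f s
lemma qC2_sum {ι : Type*} (s : Finset ι) (f : ι → Quaternion ℝ) :
    qC2 (∑ i ∈ s, f i) = ∑ i ∈ s, qC2 (f i) := map_sum qC2AH f s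

lemma qf_mul {N₁ N₂ N₃ : ℕ} (A : Matrix (Fin N₁) (Fin N₂) (Quaternion ℝ))
    (B : Matrix (Fin N₂) (Fin N₃) (Quaternion ℝ)) :
    qf (A * B) = qf A * qf B := by
  ext i j
  rcases i with m | m <;> rcases j with n | n <;>
    simp only [qf, mul_apply, fromBlocks_apply₁₁, fromBlocks_apply₁₂, fromBlocks_apply₂₁,
      fromBlocks_apply₂₂, of_apply, Fintype.sum_sum_type, qC1_sum, qC2_sum, star_sum,
      ← Finset.sum_add_distrib, neg_neg] <;>
    (try rw [← Finset.sum_neg_distrib]) <;>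
    refine Finset.sum_congr rfl fun l _ => ?_ <;>
    simp only [qC1_mul, qC2_mul, star_sub, star_add, star_mul', star_star, star_neg] <;>
    ring

lemma qf_conjTranspose {N₁ N₂ : ℕ} (A : Matrix (Fin N₁) (Fin N₂) (Quaternion ℝ)) :
    qf Aᴴ = (qf A)ᴴ := by
  ext i j
  rcases i with m | m <;> rcases j with n | n <;>
    simp [qf, conjTranspose_apply, qC1_star, qC2_star]

lemma qf_one {N : ℕ} : qf (1 : Matrix (Fin N) (Fin N) (Quaternion ℝ)) = 1 := by
  ext i j
  rcases i with m | m <;> rcases j with n | n <;>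
    by_cases h : m = n <;>
    simp [qf, Matrix.one_apply, h, qC1_one, qC2_one, qC1_zero, qC2_zero]

lemma charpoly_diagonal {n : Type*} [Fintype n] [DecidableEq n] (d : n → ℂ) :
    (Matrix.diagonal d).charpoly = ∏ i, (X - C (d i)) := by
  have h : charmatrix (Matrix.diagonal d) = Matrix.diagonal fun i => (X : ℂ[X]) - C (d i) := by
    ext i j
    by_cases h : i = j
    · subst h; simp [charmatrix_apply_eq]
    · simp [charmatrix_apply_ne _ _ _ h, diagonal_apply_ne _ h]
  rw [Matrix.charpoly, h, det_diagonal]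

lemma charpoly_conj_unitary {n : Type*} [Fintype n] [DecidableEq n]
    (U A : Matrix n n ℂ) (h1 : U * Uᴴ = 1) :
    (U * A * Uᴴ).charpoly = A.charpoly := by
  have hmap : (U.map (C : ℂ →+* ℂ[X])) * (Uᴴ.map (C : ℂ →+* ℂ[X])) = 1 := by
    rw [← Matrix.map_mul, h1]
    simp
  have key : charmatrix (U * A * Uᴴ) =
      U.map (C : ℂ →+* ℂ[X]) * charmatrix A * Uᴴ.map (C : ℂ →+* ℂ[X]) := by
    rw [charmatrix, charmatrix]
    simp only [RingHom.mapMatrix_apply]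
    rw [mul_sub, sub_mul, Matrix.map_mul, Matrix.map_mul]
    congr 1
    rw [← scalar_commute (X : ℂ[X]) (fun r' => Commute.all _ _) (U.map C), mul_assoc,
      hmap, mul_one]
  have h2 : (U.map (C : ℂ →+* ℂ[X])).det * (Uᴴ.map (C : ℂ →+* ℂ[X])).det = 1 := by
    rw [← det_mul, hmap, det_one]
  rw [Matrix.charpoly, key, det_mul, det_mul, Matrix.charpoly]
  linear_combination A.charmatrix.det * h2


lemma rToQ_conjTranspose {N₁ N₂ : ℕ} (Λ : Matrix (Fin N₁) (Fin N₂) ℝ) :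
    (rToQ Λ)ᴴ = rToQ Λᵀ := by
  ext m n <;>
    simp [conjTranspose_apply, rToQ, Matrix.map_apply, Quaternion.algebraMap_def,
      Quaternion.star_coe]

lemma rToQ_mul {N₁ N₂ N₃ : ℕ} (A : Matrix (Fin N₁) (Fin N₂) ℝ) (B : Matrix (Fin N₂) (Fin N₃) ℝ) :
    rToQ (A * B) = rToQ A * rToQ B := Matrix.map_mul

lemma qf_rToQ_diagonal {N : ℕ} (d : Fin N → ℝ) :
    qf (rToQ (Matrix.diagonal d)) =
      fromBlocks (Matrix.diagonal fun k => (d k : ℂ)) 0 0 (Matrix.diagonal fun k => (d k : ℂ)) := by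
  ext i j
  rcases i with m | m <;> rcases j with n | n <;>
    by_cases h : m = n <;>
    simp [qf, rToQ, Matrix.map_apply, diagonal_apply, h, qC1_real, qC2_real, qC1_coe, qC2_coe, qC1_zero, qC2_zero]


/-- the multiset of eigenvalues of `f(Q)ᴴ f(Q)` consists of the values `σ_k²`,
`k = 1, …, N₂` (the singular values of a QSVD, extended by zeros), each appearing twice. -/
theorem qf_eigenvalues_of_qsvd {N₁ N₂ : ℕ} (Q : Matrix (Fin N₁) (Fin N₂) (Quaternion ℝ))
    (U : Matrix (Fin N₁) (Fin N₁) (Quaternion ℝ))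
    (Λ : Matrix (Fin N₁) (Fin N₂) ℝ)
    (V : Matrix (Fin N₂) (Fin N₂) (Quaternion ℝ))
    (h : IsQSVD Q U Λ V) :
    (Finset.univ.val.map fun j =>
        (Matrix.isHermitian_conjTranspose_mul_self (qf Q)).eigenvalues j) =
      2 • (Finset.univ.val.map fun k : Fin N₂ =>
        (if h' : (k : ℕ) < N₁ then Λ ⟨(k : ℕ), h'⟩ k else 0) ^ 2) := by
  obtain ⟨⟨hU1, hU2⟩, ⟨hV1, hV2⟩, ⟨hΛd, hΛpos⟩, hQ⟩ := h
  have hH := Matrix.isHermitian_conjTranspose_mul_self (qf Q)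
  set d : Fin N₂ → ℝ := fun k => (if h' : (k : ℕ) < N₁ then Λ ⟨(k : ℕ), h'⟩ k else 0) ^ 2 with hd
  -- Step 1 : Λᵀ * Λ is diagonal with entries d
  have hdiag : Λᵀ * Λ = Matrix.diagonal d := by
    ext k l
    rw [mul_apply, diagonal_apply]
    by_cases hkl : k = l
    · subst hkl
      rw [if_pos rfl, hd]
      by_cases h' : (k : ℕ) < N₁
      · rw [Finset.sum_eq_single (⟨(k : ℕ), h'⟩ : Fin N₁)]
        · simp only [transpose_apply]
          rw [dif_pos h']; ring
        · intro m _ hm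
          have hmk : (m : ℕ) ≠ (k : ℕ) := fun hc => hm (Fin.ext hc)
          rw [transpose_apply, hΛd m k hmk, zero_mul]
        · intro hc; exact absurd (Finset.mem_univ _) hc
      · simp only [dif_neg h']
        rw [Finset.sum_eq_zero fun m _ => ?_]
        · ring
        · have hmk : (m : ℕ) ≠ (k : ℕ) := by omega
          rw [transpose_apply, hΛd m k hmk, zero_mul]
    · rw [if_neg hkl]
      refine Finset.sum_eq_zero fun m _ => ?_
      rcases eq_or_ne ((m : ℕ)) ((k : ℕ)) with hmk | hmk
      · have hml : (m : ℕ) ≠ (l : ℕ) := by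
          intro hc
          exact hkl (Fin.ext (hmk.symm.trans hc))
        rw [hΛd m l hml, mul_zero]
      · rw [transpose_apply, hΛd m k hmk, zero_mul]
  -- Step 2 : Qᴴ Q = V (rToQ (diagonal d)) Vᴴ
  have hQQ : Qᴴ * Q = V * rToQ (Matrix.diagonal d) * Vᴴ := by
    rw [hQ]
    have e1 : (U * rToQ Λ * Vᴴ)ᴴ * (U * rToQ Λ * Vᴴ)
        = V * ((rToQ Λ)ᴴ * (Uᴴ * U) * rToQ Λ) * Vᴴ := by
      simp only [conjTranspose_mul, conjTranspose_conjTranspose, Matrix.mul_assoc]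
    rw [e1, hU2, Matrix.mul_one, rToQ_conjTranspose, ← rToQ_mul, hdiag]
  -- Step 3 : qf V is unitary
  have hfV : qf V * (qf V)ᴴ = 1 := by
    rw [← qf_conjTranspose, ← qf_mul, hV1, qf_one]
  -- Step 4 : charpoly computation on the QSVD side
  have hA : (qf Q)ᴴ * qf Q = qf V * qf (rToQ (Matrix.diagonal d)) * (qf V)ᴴ := by
    rw [← qf_conjTranspose, ← qf_mul, hQQ, qf_mul, qf_mul, qf_conjTranspose]
  have hchar1 : ((qf Q)ᴴ * qf Q).charpoly
      = (∏ k, (X - C ((d k : ℝ) : ℂ))) * ∏ k, (X - C ((d k : ℝ) : ℂ)) := by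
    rw [hA, charpoly_conj_unitary _ _ hfV, qf_rToQ_diagonal,
      Matrix.charpoly_fromBlocks_zero₁₂, _root_.charpoly_diagonal]
  -- Step 5 : charpoly via eigenvalues
  have hW : (hH.eigenvectorUnitary : Matrix (Fin N₂ ⊕ Fin N₂) (Fin N₂ ⊕ Fin N₂) ℂ)
      * (hH.eigenvectorUnitary : Matrix (Fin N₂ ⊕ Fin N₂) (Fin N₂ ⊕ Fin N₂) ℂ)ᴴ = 1 := by
    exact (Matrix.mem_unitaryGroup_iff).mp hH.eigenvectorUnitary.2
  have hchar2 : ((qf Q)ᴴ * qf Q).charpoly = ∏ j, (X - C ((hH.eigenvalues j : ℝ) : ℂ)) := by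
    conv_lhs => rw [hH.spectral_theorem]
    rw [Unitary.conjStarAlgAut_apply, Matrix.star_eq_conjTranspose, charpoly_conj_unitary _ _ hW, _root_.charpoly_diagonal]
    rfl
  -- Step 6 : multiset of eigenvalues from roots of the characteristic polynomial
  have hs : (((Finset.univ.val.map fun j => hH.eigenvalues j).map
        fun r : ℝ => (r : ℂ)).map fun a => X - C a).prod = ((qf Q)ᴴ * qf Q).charpoly := by
    rw [hchar2, Finset.prod_eq_multiset_prod, Multiset.map_map, Multiset.map_map]
    rfl
  have ht : ((((2 • (Finset.univ.val.map fun k : Fin N₂ => d k)) : Multiset ℝ).map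
        fun r : ℝ => (r : ℂ)).map fun a => X - C a).prod = ((qf Q)ᴴ * qf Q).charpoly := by
    rw [hchar1, two_smul, Multiset.map_add, Multiset.map_add, Multiset.prod_add,
      Finset.prod_eq_multiset_prod, Multiset.map_map, Multiset.map_map]
    rfl
  have hroots := congrArg Polynomial.roots (hs.trans ht.symm)
  rw [roots_multiset_prod_X_sub_C, roots_multiset_prod_X_sub_C] at hroots
  exact Multiset.map_injective Complex.ofReal_injective hroots
end
end
end

section
/- (Quaternion singular value thresholding.) Let Q ∈ ℍ^{N₁×N₂} have a QSVD Q = U Λ Vᴴ with singular values σ₁, …, σ_{min(N₁,N₂)} on the diagonal of Λ, and let ξ > 0. Define S_ξ(Q) = U Λ̆ Vᴴ, where Λ̆ is the rectangular diagonal matrix with diagonal entries max(σ_k − ξ, 0). Then S_ξ(Q) is the unique minimizer over X ∈ ℍ^{N₁×N₂} of the function N(X) = ξ‖X‖_* + ½‖X − Q‖_F²; that is, for every X, N(X) ≥ N(S_ξ(Q)), with equality only when X = S_ξ(Q). -/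
open Matrix

noncomputable section

namespace QSVT
open Polynomial
open scoped Quaternion

@[simp] lemma qC1_re (q : Quaternion ℝ) : (qC1 q).re = q.re := rfl
@[simp] lemma qC1_im (q : Quaternion ℝ) : (qC1 q).im = q.imI := rfl
@[simp] lemma qC2_re (q : Quaternion ℝ) : (qC2 q).re = q.imJ := rfl
@[simp] lemma qC2_im (q : Quaternion ℝ) : (qC2 q).im = q.imK := rfl

lemma qC1_add (p q : Quaternion ℝ) : qC1 (p + q) = qC1 p + qC1 q := by
  apply Complex.ext <;> simp

lemma qC2_add (p q : Quaternion ℝ) : qC2 (p + q) = qC2 p + qC2 q := by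
  apply Complex.ext <;> simp

lemma qC1_sub (p q : Quaternion ℝ) : qC1 (p - q) = qC1 p - qC1 q := by
  apply Complex.ext <;> simp

lemma qC2_sub (p q : Quaternion ℝ) : qC2 (p - q) = qC2 p - qC2 q := by
  apply Complex.ext <;> simp

lemma qC1_star (q : Quaternion ℝ) : qC1 (star q) = star (qC1 q) := by
  apply Complex.ext <;> simp

lemma qC2_star (q : Quaternion ℝ) : qC2 (star q) = - qC2 q := by
  apply Complex.ext <;> simp

lemma qC1_mul (p q : Quaternion ℝ) :
    qC1 (p * q) = qC1 p * qC1 q - qC2 p * star (qC2 q) := by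
  apply Complex.ext <;> simp [Quaternion.re_mul, Quaternion.imI_mul, Complex.mul_re,
    Complex.mul_im] <;> ring

lemma qC2_mul (p q : Quaternion ℝ) :
    qC2 (p * q) = qC1 p * qC2 q + qC2 p * star (qC1 q) := by
  apply Complex.ext <;> simp [Quaternion.imJ_mul, Quaternion.imK_mul, Complex.mul_re,
    Complex.mul_im] <;> ring

def qC1h : Quaternion ℝ →+ ℂ where
  toFun := qC1
  map_zero' := by apply Complex.ext <;> simp
  map_add' := qC1_add
def qC2h : Quaternion ℝ →+ ℂ where
  toFun := qC2
  map_zero' := by apply Complex.ext <;> simp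
  map_add' := qC2_add

lemma qC1_sum {ι : Type*} (s : Finset ι) (f : ι → Quaternion ℝ) :
    qC1 (∑ i ∈ s, f i) = ∑ i ∈ s, qC1 (f i) := by exact map_sum qC1h f s

lemma qC2_sum {ι : Type*} (s : Finset ι) (f : ι → Quaternion ℝ) :
    qC2 (∑ i ∈ s, f i) = ∑ i ∈ s, qC2 (f i) := by exact map_sum qC2h f s

def qreh : Quaternion ℝ →+ ℝ where
  toFun := QuaternionAlgebra.re
  map_zero' := rfl
  map_add' := fun _ _ => rfl

lemma qre_sum {ι : Type*} (s : Finset ι) (f : ι → Quaternion ℝ) :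
    (∑ i ∈ s, f i).re = ∑ i ∈ s, (f i).re := by exact map_sum qreh f s

lemma qre_mul_comm (p q : Quaternion ℝ) : (p * q).re = (q * p).re := by
  simp [Quaternion.re_mul]; ring

variable {N₁ N₂ N₃ : ℕ}

lemma qf_sub (X Y : Matrix (Fin N₁) (Fin N₂) (Quaternion ℝ)) :
    qf (X - Y) = qf X - qf Y := by
  ext i j
  rcases i with m | m <;> rcases j with n | n <;>
    simp [qf, qC1_sub, qC2_sub, star_sub, neg_sub] <;> ring

lemma qf_mul (A : Matrix (Fin N₁) (Fin N₂) (Quaternion ℝ))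
    (B : Matrix (Fin N₂) (Fin N₃) (Quaternion ℝ)) :
    qf (A * B) = qf A * qf B := by
  ext i j
  rcases i with m | m <;> rcases j with n | n <;>
    simp [qf, Matrix.mul_apply, Matrix.fromBlocks_multiply, qC1_sum, qC2_sum, qC1_mul, qC2_mul,
      Finset.sum_sub_distrib, Finset.sum_add_distrib, star_sum, star_sub, star_add,
      StarMul.star_mul, star_star, mul_comm] <;> abel

lemma qf_conjTranspose (A : Matrix (Fin N₁) (Fin N₂) (Quaternion ℝ)) :
    qf (Aᴴ) = (qf A)ᴴ := by
  ext i j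
  rcases i with m | m <;> rcases j with n | n <;>
    simp [qf, conjTranspose_apply, qC1_star, qC2_star]

lemma qf_one : qf (1 : Matrix (Fin N₁) (Fin N₁) (Quaternion ℝ)) = 1 := by
  ext i j
  rcases i with m | m <;> rcases j with n | n <;>
    simp only [qf, Matrix.one_apply, Matrix.fromBlocks_apply₁₁, Matrix.fromBlocks_apply₁₂,
      Matrix.fromBlocks_apply₂₁, Matrix.fromBlocks_apply₂₂, Matrix.of_apply, Sum.inl.injEq,
      Sum.inr.injEq, apply_ite qC1, apply_ite qC2, apply_ite (star : ℂ → ℂ),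
      apply_ite Neg.neg] <;>
    split <;> apply Complex.ext <;> simp

lemma qf_inj (X Y : Matrix (Fin N₁) (Fin N₂) (Quaternion ℝ)) (h : qf X = qf Y) : X = Y := by
  funext m n
  have h1 := congrFun (congrFun h (Sum.inl m)) (Sum.inl n)
  have h2 := congrFun (congrFun h (Sum.inl m)) (Sum.inr n)
  simp [qf, Complex.ext_iff] at h1 h2
  exact Quaternion.ext _ _ h1.1 h1.2 h2.1 h2.2



variable {n : Type*} [Fintype n] [DecidableEq n]

lemma det_smul_one_sub_conj (P : Matrix n n ℂ) (hP : P * Pᴴ = 1) (e : n → ℂ) (t : ℂ) :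
    det (t • (1 : Matrix n n ℂ) - P * Matrix.diagonal e * Pᴴ) = ∏ j, (t - e j) := by
  have h : t • (1 : Matrix n n ℂ) - P * Matrix.diagonal e * Pᴴ
      = P * (Matrix.diagonal (fun j => t - e j)) * Pᴴ := by
    have h1 : Matrix.diagonal (fun j : n => t - e j)
        = t • (1 : Matrix n n ℂ) - Matrix.diagonal e := by
      rw [smul_one_eq_diagonal, diagonal_sub]
    rw [h1, mul_sub, sub_mul, Matrix.mul_smul, mul_one, Matrix.smul_mul, hP]
  have hP' : Pᴴ * P = 1 := mul_eq_one_comm.mp hP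
  rw [h, det_mul, det_mul, mul_comm, ← mul_assoc, ← det_mul, hP', det_one, one_mul, det_diagonal]

lemma eigenvalues_multiset {M : Matrix n n ℂ} (hM : M.IsHermitian) (P : Matrix n n ℂ)
    (hP : P * Pᴴ = 1) (d : n → ℝ)
    (hd : M = P * Matrix.diagonal (fun j => (d j : ℂ)) * Pᴴ) :
    Finset.univ.val.map hM.eigenvalues = Finset.univ.val.map d := by
  have key : ∀ t : ℝ, ∏ j, (t - hM.eigenvalues j) = ∏ j, (t - d j) := by
    intro t
    have hU := (Matrix.mem_unitaryGroup_iff).mp (hM.eigenvectorUnitary).2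
    rw [Matrix.star_eq_conjTranspose] at hU
    have h1 : det ((t : ℂ) • (1 : Matrix n n ℂ) - M)
        = ∏ j, ((t : ℂ) - (hM.eigenvalues j : ℂ)) := by
      conv_lhs => rw [hM.spectral_theorem, Unitary.conjStarAlgAut_apply, Matrix.star_eq_conjTranspose]
      exact det_smul_one_sub_conj _ hU _ t
    have h2 : det ((t : ℂ) • (1 : Matrix n n ℂ) - M) = ∏ j, ((t : ℂ) - (d j : ℂ)) := by
      conv_lhs => rw [hd]
      exact det_smul_one_sub_conj _ hP _ t
    have h3 : ((∏ j, (t - hM.eigenvalues j) : ℝ) : ℂ) = ((∏ j, (t - d j) : ℝ) : ℂ) := by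
      push_cast
      rw [← h1, ← h2]
    exact_mod_cast h3
  have hpq : (∏ j, (X - C (hM.eigenvalues j))) = ∏ j, (X - C (d j)) := by
    apply Polynomial.funext
    intro t
    simpa [Polynomial.eval_prod] using key t
  have r1 : (∏ j, (X - C (hM.eigenvalues j))).roots = Finset.univ.val.map hM.eigenvalues := by
    rw [Finset.prod_eq_multiset_prod]
    have := roots_multiset_prod_X_sub_C (Finset.univ.val.map hM.eigenvalues)
    rw [Multiset.map_map] at this
    exact this
  have r2 : (∏ j, (X - C (d j))).roots = Finset.univ.val.map d := by
    rw [Finset.prod_eq_multiset_prod]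
    have := roots_multiset_prod_X_sub_C (Finset.univ.val.map d)
    rw [Multiset.map_map] at this
    exact this
  rw [← r1, ← r2, hpq]

lemma sum_sqrt_eigenvalues {M : Matrix n n ℂ} (hM : M.IsHermitian) (P : Matrix n n ℂ)
    (hP : P * Pᴴ = 1) (d : n → ℝ)
    (hd : M = P * Matrix.diagonal (fun j => (d j : ℂ)) * Pᴴ) :
    ∑ j, Real.sqrt (hM.eigenvalues j) = ∑ j, Real.sqrt (d j) := by
  have h := eigenvalues_multiset hM P hP d hd
  calc ∑ j, Real.sqrt (hM.eigenvalues j)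
      = ((Finset.univ.val.map hM.eigenvalues).map Real.sqrt).sum := by
        rw [Multiset.map_map]; rfl
    _ = ((Finset.univ.val.map d).map Real.sqrt).sum := by rw [h]
    _ = ∑ j, Real.sqrt (d j) := by rw [Multiset.map_map]; rfl



variable {m n : Type*} [Fintype m] [Fintype n] [DecidableEq n]

lemma cs_re (x y : m → ℂ) :
    (star x ⬝ᵥ y).re ≤ Real.sqrt (star x ⬝ᵥ x).re * Real.sqrt (star y ⬝ᵥ y).re := by
  set x' := (WithLp.equiv 2 (m → ℂ)).symm x with hx'
  set y' := (WithLp.equiv 2 (m → ℂ)).symm y with hy'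
  have h1 : star x ⬝ᵥ y = (inner ℂ x' y' : ℂ) := by rw [dotProduct_comm]; rfl
  have hx : Real.sqrt (star x ⬝ᵥ x).re = ‖x'‖ := by
    have : star x ⬝ᵥ x = (inner ℂ x' x' : ℂ) := by rw [dotProduct_comm]; rfl
    rw [this]
    rw [show ((inner ℂ x' x' : ℂ)).re = RCLike.re (inner ℂ x' x' : ℂ) from rfl]
    rw [inner_self_eq_norm_sq]
    exact Real.sqrt_sq (norm_nonneg _)
  have hy : Real.sqrt (star y ⬝ᵥ y).re = ‖y'‖ := by
    have : star y ⬝ᵥ y = (inner ℂ y' y' : ℂ) := by rw [dotProduct_comm]; rfl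
    rw [this]
    rw [show ((inner ℂ y' y' : ℂ)).re = RCLike.re (inner ℂ y' y' : ℂ) from rfl]
    rw [inner_self_eq_norm_sq]
    exact Real.sqrt_sq (norm_nonneg _)
  rw [h1, hx, hy]
  calc (inner ℂ x' y' : ℂ).re ≤ ‖(inner ℂ x' y' : ℂ)‖ := Complex.re_le_norm _
    _ ≤ ‖x'‖ * ‖y'‖ := norm_inner_le_norm x' y'

lemma dot_shift (W A : Matrix m n ℂ) (v : n → ℂ) :
    star v ⬝ᵥ ((Wᴴ * A) *ᵥ v) = star (W *ᵥ v) ⬝ᵥ (A *ᵥ v) := by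
  rw [← mulVec_mulVec, Matrix.dotProduct_mulVec, ← Matrix.star_mulVec]

lemma conj_diag_entry (E M : Matrix n n ℂ) (j : n) :
    (Eᴴ * M * E) j j = star (fun i => E i j) ⬝ᵥ (M *ᵥ fun i => E i j) := by
  simp only [Matrix.mul_apply, Matrix.mulVec, dotProduct, conjTranspose_apply,
    Finset.sum_mul, Finset.mul_sum, Pi.star_apply]
  rw [Finset.sum_comm]
  apply Finset.sum_congr rfl
  intro p _
  apply Finset.sum_congr rfl
  intro q _
  ring

/-- Key duality inequality: `Re tr(Wᴴ A) ≤ ξ · Σ σ_j(A)` when `‖W v‖ ≤ ξ ‖v‖`. -/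
lemma trace_le_nuclear (ξ : ℝ) (hξ : 0 ≤ ξ) (W A : Matrix m n ℂ)
    (hW : ∀ v : n → ℂ, (star (W *ᵥ v) ⬝ᵥ (W *ᵥ v)).re ≤ ξ ^ 2 * (star v ⬝ᵥ v).re) :
    (trace (Wᴴ * A)).re ≤
      ξ * ∑ j, Real.sqrt ((Matrix.isHermitian_conjTranspose_mul_self A).eigenvalues j) := by
  set hH := Matrix.isHermitian_conjTranspose_mul_self A with hhH
  set E : Matrix n n ℂ := (hH.eigenvectorUnitary : Matrix n n ℂ) with hE
  have hEmem := hH.eigenvectorUnitary.2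
  have hE2 : Eᴴ * E = 1 := by
    have := Matrix.mem_unitaryGroup_iff'.mp hEmem
    rwa [Matrix.star_eq_conjTranspose] at this
  have hE1 : E * Eᴴ = 1 := by
    have := Matrix.mem_unitaryGroup_iff.mp hEmem
    rwa [Matrix.star_eq_conjTranspose] at this
  have hdiag : Eᴴ * (Aᴴ * A) * E = diagonal (RCLike.ofReal ∘ hH.eigenvalues) := by
    have := hH.conjStarAlgAut_star_eigenvectorUnitary
    rwa [Unitary.conjStarAlgAut_star_apply, Matrix.star_eq_conjTranspose] at this
  -- column vectors
  set c : n → (n → ℂ) := fun j i => E i j with hc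
  have hcol_unit : ∀ j, (star (c j) ⬝ᵥ (c j)) = 1 := by
    intro j
    have h := congrFun (congrFun hE2 j) j
    simp only [Matrix.mul_apply, conjTranspose_apply, Matrix.one_apply_eq] at h
    simpa [dotProduct, hc] using h
  have hAc : ∀ j, (star (A *ᵥ c j) ⬝ᵥ (A *ᵥ c j)).re = hH.eigenvalues j := by
    intro j
    rw [← dot_shift A A (c j), ← conj_diag_entry E (Aᴴ * A) j, hdiag]
    simp [Matrix.diagonal_apply_eq]
  have htr : trace (Wᴴ * A) = ∑ j, star (W *ᵥ c j) ⬝ᵥ (A *ᵥ c j) := by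
    have h1 : trace (Eᴴ * (Wᴴ * A) * E) = trace (Wᴴ * A) := by
      rw [Matrix.trace_mul_comm (Eᴴ * (Wᴴ * A)) E, ← Matrix.mul_assoc, hE1, Matrix.one_mul]
    rw [← h1, Matrix.trace]
    apply Finset.sum_congr rfl
    intro j _
    rw [Matrix.diag_apply, conj_diag_entry E (Wᴴ * A) j, dot_shift]
  have hre : (trace (Wᴴ * A)).re = ∑ j, (star (W *ᵥ c j) ⬝ᵥ (A *ᵥ c j)).re := by
    rw [htr, Complex.re_sum]
  rw [hre, Finset.mul_sum]
  apply Finset.sum_le_sum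
  intro j _
  have hnn : 0 ≤ hH.eigenvalues j := by
    rw [hhH]
    exact Matrix.eigenvalues_conjTranspose_mul_self_nonneg A j
  calc (star (W *ᵥ c j) ⬝ᵥ (A *ᵥ c j)).re
      ≤ Real.sqrt (star (W *ᵥ c j) ⬝ᵥ (W *ᵥ c j)).re *
        Real.sqrt (star (A *ᵥ c j) ⬝ᵥ (A *ᵥ c j)).re := cs_re _ _
    _ ≤ ξ * Real.sqrt (hH.eigenvalues j) := by
        rw [hAc j]
        apply mul_le_mul_of_nonneg_right _ (Real.sqrt_nonneg _)
        have h1 : (star (W *ᵥ c j) ⬝ᵥ (W *ᵥ c j)).re ≤ ξ ^ 2 := by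
          have := hW (c j)
          rwa [hcol_unit j, Complex.one_re, mul_one] at this
        calc Real.sqrt (star (W *ᵥ c j) ⬝ᵥ (W *ᵥ c j)).re ≤ Real.sqrt (ξ ^ 2) :=
              Real.sqrt_le_sqrt h1
          _ = ξ := Real.sqrt_sq hξ



variable {N₁ N₂ N₃ : ℕ}

lemma rToQ_mul (A : Matrix (Fin N₁) (Fin N₂) ℝ) (B : Matrix (Fin N₂) (Fin N₃) ℝ) :
    rToQ (A * B) = rToQ A * rToQ B := by
  unfold rToQ
  exact Matrix.map_mul

lemma rToQ_sub (A B : Matrix (Fin N₁) (Fin N₂) ℝ) : rToQ (A - B) = rToQ A - rToQ B := by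
  funext m n
  simp [rToQ, map_sub]

lemma rToQ_conjTranspose (A : Matrix (Fin N₁) (Fin N₂) ℝ) : (rToQ A)ᴴ = rToQ Aᵀ := by
  funext m n
  simp only [rToQ, Matrix.conjTranspose_apply, Matrix.map_apply, Matrix.transpose_apply,
    Quaternion.algebraMap_def, Quaternion.star_coe]

lemma trace_rToQ_re (M : Matrix (Fin N₁) (Fin N₁) ℝ) :
    (Matrix.trace (rToQ M)).re = Matrix.trace M := by
  unfold Matrix.trace
  rw [qre_sum]
  apply Finset.sum_congr rfl
  intro i _
  simp [rToQ, Matrix.diag, Quaternion.algebraMap_def, Quaternion.re_coe]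

lemma qtrace_mul_re (A : Matrix (Fin N₁) (Fin N₂) (Quaternion ℝ))
    (B : Matrix (Fin N₂) (Fin N₁) (Quaternion ℝ)) :
    (Matrix.trace (A * B)).re = (Matrix.trace (B * A)).re := by
  unfold Matrix.trace
  rw [qre_sum, qre_sum]
  simp only [Matrix.diag_apply, Matrix.mul_apply, qre_sum]
  rw [Finset.sum_comm]
  exact Finset.sum_congr rfl fun k _ => Finset.sum_congr rfl fun i _ => qre_mul_comm _ _

lemma trace_conj_re (V : Matrix (Fin N₂) (Fin N₂) (Quaternion ℝ)) (hV : Vᴴ * V = 1)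
    (R : Matrix (Fin N₂) (Fin N₂) (Quaternion ℝ)) :
    (Matrix.trace (V * R * Vᴴ)).re = (Matrix.trace R).re := by
  rw [qtrace_mul_re (V * R) Vᴴ, ← Matrix.mul_assoc, hV, Matrix.one_mul]

lemma trace_qf_re (M : Matrix (Fin N₁) (Fin N₁) (Quaternion ℝ)) :
    (Matrix.trace (qf M)).re = 2 * (Matrix.trace M).re := by
  unfold Matrix.trace
  rw [Complex.re_sum, Fintype.sum_sum_type]
  simp only [Matrix.diag_apply, qf, Matrix.fromBlocks_apply₁₁, Matrix.fromBlocks_apply₂₂,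
    Matrix.of_apply, qC1_re, Complex.star_def, Complex.conj_re]
  rw [qre_sum]
  ring

/-- Quaternion Frobenius inner product. -/
def qip (X Y : Matrix (Fin N₁) (Fin N₂) (Quaternion ℝ)) : ℝ := (Matrix.trace (Xᴴ * Y)).re

lemma qre_star_mul (p q : Quaternion ℝ) : (star p * q).re = (star q * p).re := by
  simp [Quaternion.re_mul]
  ring

lemma qre_star_self (p : Quaternion ℝ) : (star p * p).re = ‖p‖ ^ 2 := by
  rw [qre_mul_comm, ← Quaternion.normSq_def, Quaternion.normSq_eq_norm_mul_self, sq]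

lemma qip_eq_sum (X Y : Matrix (Fin N₁) (Fin N₂) (Quaternion ℝ)) :
    qip X Y = ∑ n, ∑ m, (star (X m n) * Y m n).re := by
  unfold qip Matrix.trace
  rw [qre_sum]
  apply Finset.sum_congr rfl
  intro j _
  simp only [Matrix.diag_apply, Matrix.mul_apply, Matrix.conjTranspose_apply]
  rw [qre_sum]

lemma qip_self (X : Matrix (Fin N₁) (Fin N₂) (Quaternion ℝ)) :
    qip X X = ∑ m, ∑ n, ‖X m n‖ ^ 2 := by
  rw [qip_eq_sum, Finset.sum_comm]
  exact Finset.sum_congr rfl fun m _ => Finset.sum_congr rfl fun n _ => qre_star_self _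

lemma qip_self_nonneg (X : Matrix (Fin N₁) (Fin N₂) (Quaternion ℝ)) : 0 ≤ qip X X := by
  rw [qip_self]
  positivity

lemma qFrob_sq (X : Matrix (Fin N₁) (Fin N₂) (Quaternion ℝ)) : qFrob X ^ 2 = qip X X := by
  rw [qFrob, Real.sq_sqrt (by positivity), qip_self]

lemma qip_symm (X Y : Matrix (Fin N₁) (Fin N₂) (Quaternion ℝ)) : qip X Y = qip Y X := by
  rw [qip_eq_sum, qip_eq_sum]
  exact Finset.sum_congr rfl fun n _ => Finset.sum_congr rfl fun m _ => qre_star_mul _ _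

lemma qip_sub_left (A B C : Matrix (Fin N₁) (Fin N₂) (Quaternion ℝ)) :
    qip (A - B) C = qip A C - qip B C := by
  unfold qip
  rw [Matrix.conjTranspose_sub, Matrix.sub_mul, Matrix.trace_sub]
  simp

lemma qip_sub_right (A B C : Matrix (Fin N₁) (Fin N₂) (Quaternion ℝ)) :
    qip A (B - C) = qip A B - qip A C := by
  unfold qip
  rw [Matrix.mul_sub, Matrix.trace_sub]
  simp

lemma qip_expand (A B : Matrix (Fin N₁) (Fin N₂) (Quaternion ℝ)) :
    qip (A - B) (A - B) = qip A A - 2 * qip A B + qip B B := by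
  rw [qip_sub_left, qip_sub_right, qip_sub_right, qip_symm B A]
  ring

lemma qip_qf (X Y : Matrix (Fin N₁) (Fin N₂) (Quaternion ℝ)) :
    qip X Y = (1 / 2) * (Matrix.trace ((qf X)ᴴ * qf Y)).re := by
  rw [← qf_conjTranspose, ← qf_mul, trace_qf_re]
  unfold qip
  ring

lemma qf_unitary {V : Matrix (Fin N₂) (Fin N₂) (Quaternion ℝ)} (hV : qUnitary V) :
    qf V * (qf V)ᴴ = 1 ∧ (qf V)ᴴ * qf V = 1 := by
  constructor
  · rw [← qf_conjTranspose, ← qf_mul, hV.1, qf_one]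
  · rw [← qf_conjTranspose, ← qf_mul, hV.2, qf_one]

lemma qf_rToQ_diagonal (d : Fin N₂ → ℝ) :
    qf (rToQ (Matrix.diagonal d)) = Matrix.diagonal (fun j => ((Sum.elim d d j : ℝ) : ℂ)) := by
  funext i j
  rcases i with m | m <;> rcases j with n | n <;>
    simp only [qf, rToQ, Matrix.fromBlocks_apply₁₁, Matrix.fromBlocks_apply₁₂,
      Matrix.fromBlocks_apply₂₁, Matrix.fromBlocks_apply₂₂, Matrix.of_apply, Matrix.map_apply,
      Matrix.diagonal_apply, Sum.inl.injEq, Sum.inr.injEq, Sum.elim_inl, Sum.elim_inr,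
      reduceCtorEq, if_false, Quaternion.algebraMap_def] <;>
    split <;>
    apply Complex.ext <;> simp

lemma col_sum_eq {k : Fin N₂} (g : Fin N₁ → ℝ)
    (hg : ∀ m : Fin N₁, (m : ℕ) ≠ (k : ℕ) → g m = 0) :
    ∑ m, g m = if h : (k : ℕ) < N₁ then g ⟨k, h⟩ else 0 := by
  split_ifs with h
  · refine Finset.sum_eq_single _ (fun b _ hb => hg b fun hc => hb (Fin.ext hc))
      (fun hmem => absurd (Finset.mem_univ _) hmem)
  · refine Finset.sum_eq_zero fun m _ => hg m ?_
    have := m.isLt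
    omega

lemma tmul_diag (M : Matrix (Fin N₁) (Fin N₂) ℝ)
    (hM : ∀ (m : Fin N₁) (n : Fin N₂), (m : ℕ) ≠ (n : ℕ) → M m n = 0) :
    Mᵀ * M = Matrix.diagonal (fun k => ∑ m, (M m k) ^ 2) := by
  funext k l
  by_cases hkl : k = l
  · subst hkl
    rw [Matrix.diagonal_apply_eq, Matrix.mul_apply]
    exact Finset.sum_congr rfl fun m _ => by rw [Matrix.transpose_apply, sq]
  · rw [Matrix.diagonal_apply_ne _ hkl, Matrix.mul_apply]
    refine Finset.sum_eq_zero fun m _ => ?_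
    rw [Matrix.transpose_apply]
    by_cases hmk : (m : ℕ) = (k : ℕ)
    · have : (m : ℕ) ≠ (l : ℕ) := fun hc => hkl (Fin.ext (hmk ▸ hc))
      rw [hM m l this, mul_zero]
    · rw [hM m k hmk, zero_mul]

lemma triple_decomp {U : Matrix (Fin N₁) (Fin N₁) (Quaternion ℝ)}
    {V : Matrix (Fin N₂) (Fin N₂) (Quaternion ℝ)} (hU : qUnitary U)
    (B C : Matrix (Fin N₁) (Fin N₂) ℝ) :
    (U * rToQ B * Vᴴ)ᴴ * (U * rToQ C * Vᴴ) = V * rToQ (Bᵀ * C) * Vᴴ := by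
  rw [Matrix.conjTranspose_mul, Matrix.conjTranspose_mul, Matrix.conjTranspose_conjTranspose,
    rToQ_conjTranspose, rToQ_mul]
  calc V * (rToQ Bᵀ * Uᴴ) * (U * rToQ C * Vᴴ)
      = V * (rToQ Bᵀ * (Uᴴ * U) * rToQ C * Vᴴ) := by
        simp only [Matrix.mul_assoc]
    _ = V * (rToQ Bᵀ * rToQ C) * Vᴴ := by
        rw [hU.2, Matrix.mul_one]
        simp only [Matrix.mul_assoc]
    _ = V * (rToQ Bᵀ * rToQ C * Vᴴ) := by simp only [Matrix.mul_assoc]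
    _ = V * (rToQ Bᵀ * rToQ C) * Vᴴ := by simp only [Matrix.mul_assoc]

lemma conj_decomp {U : Matrix (Fin N₁) (Fin N₁) (Quaternion ℝ)}
    {V : Matrix (Fin N₂) (Fin N₂) (Quaternion ℝ)} (hU : qUnitary U)
    (B : Matrix (Fin N₁) (Fin N₂) ℝ)
    (hB : ∀ (m : Fin N₁) (n : Fin N₂), (m : ℕ) ≠ (n : ℕ) → B m n = 0) :
    (qf (U * rToQ B * Vᴴ))ᴴ * qf (U * rToQ B * Vᴴ) =
      qf V * Matrix.diagonal (fun j =>
        ((Sum.elim (fun k => ∑ m, (B m k) ^ 2) (fun k => ∑ m, (B m k) ^ 2) j : ℝ) : ℂ))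
        * (qf V)ᴴ := by
  rw [← qf_conjTranspose, ← qf_mul, triple_decomp hU B B, tmul_diag B hB, qf_mul, qf_mul,
    qf_conjTranspose, qf_rToQ_diagonal]

lemma qNuclearNorm_decomp {U : Matrix (Fin N₁) (Fin N₁) (Quaternion ℝ)}
    {V : Matrix (Fin N₂) (Fin N₂) (Quaternion ℝ)} (hU : qUnitary U) (hV : qUnitary V)
    (B : Matrix (Fin N₁) (Fin N₂) ℝ)
    (hB : ∀ (m : Fin N₁) (n : Fin N₂), (m : ℕ) ≠ (n : ℕ) → B m n = 0) :
    qNuclearNorm (U * rToQ B * Vᴴ) = ∑ k, Real.sqrt (∑ m, (B m k) ^ 2) := by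
  unfold qNuclearNorm
  rw [sum_sqrt_eigenvalues (Matrix.isHermitian_conjTranspose_mul_self (qf (U * rToQ B * Vᴴ)))
    (qf V) (qf_unitary hV).1
    (Sum.elim (fun k => ∑ m, (B m k) ^ 2) (fun k => ∑ m, (B m k) ^ 2))
    (conj_decomp hU B hB)]
  rw [Fintype.sum_sum_type]
  simp only [Sum.elim_inl, Sum.elim_inr]
  ring

lemma qip_decomp {U : Matrix (Fin N₁) (Fin N₁) (Quaternion ℝ)}
    {V : Matrix (Fin N₂) (Fin N₂) (Quaternion ℝ)} (hU : qUnitary U) (hV : qUnitary V)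
    (B C : Matrix (Fin N₁) (Fin N₂) ℝ) :
    qip (U * rToQ B * Vᴴ) (U * rToQ C * Vᴴ) = ∑ k, ∑ m, B m k * C m k := by
  unfold qip
  rw [triple_decomp hU B C, trace_conj_re V hV.2, trace_rToQ_re]
  unfold Matrix.trace
  apply Finset.sum_congr rfl
  intro k _
  simp only [Matrix.diag_apply, Matrix.mul_apply, Matrix.transpose_apply]


lemma opnorm_of_decomp {m' n' : Type*} [Fintype m'] [Fintype n'] [DecidableEq n'] (xi : ℝ)
    (W' : Matrix m' n' ℂ) (P : Matrix n' n' ℂ) (hP : P * Pᴴ = 1)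
    (d : n' → ℝ) (hd : ∀ j, d j ≤ xi ^ 2)
    (hdecomp : W'ᴴ * W' = P * Matrix.diagonal (fun j => ((d j : ℝ) : ℂ)) * Pᴴ) :
    ∀ v : n' → ℂ, (star (W' *ᵥ v) ⬝ᵥ (W' *ᵥ v)).re ≤ xi ^ 2 * (star v ⬝ᵥ v).re := by
  intro v
  rw [← dot_shift W' W' v, hdecomp]
  set u := Pᴴ *ᵥ v with hu
  have hstar_u : star u = star v ᵥ* P := by
    rw [hu, Matrix.star_mulVec, Matrix.conjTranspose_conjTranspose]
  have h1 : star v ⬝ᵥ ((P * Matrix.diagonal (fun j => ((d j : ℝ) : ℂ)) * Pᴴ) *ᵥ v)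
      = star u ⬝ᵥ (Matrix.diagonal (fun j => ((d j : ℝ) : ℂ)) *ᵥ u) := by
    have hv : (P * Matrix.diagonal (fun j => ((d j : ℝ) : ℂ)) * Pᴴ) *ᵥ v
        = P *ᵥ (Matrix.diagonal (fun j => ((d j : ℝ) : ℂ)) *ᵥ u) := by
      rw [hu, Matrix.mulVec_mulVec, Matrix.mulVec_mulVec]
    rw [hv, Matrix.dotProduct_mulVec, hstar_u]
  have h2 : (star u ⬝ᵥ (Matrix.diagonal (fun j => ((d j : ℝ) : ℂ)) *ᵥ u)).re
      = ∑ j, d j * Complex.normSq (u j) := by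
    unfold dotProduct
    rw [Complex.re_sum]
    apply Finset.sum_congr rfl
    intro j _
    rw [Matrix.mulVec_diagonal, Pi.star_apply, Complex.star_def]
    have : (starRingEnd ℂ) (u j) * ((d j : ℂ) * u j)
        = (d j : ℂ) * ((Complex.normSq (u j) : ℝ) : ℂ) := by
      rw [Complex.normSq_eq_conj_mul_self]
      ring
    rw [this, ← Complex.ofReal_mul, Complex.ofReal_re]
  have h3 : (star u ⬝ᵥ u).re = ∑ j, Complex.normSq (u j) := by
    unfold dotProduct
    rw [Complex.re_sum]
    apply Finset.sum_congr rfl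
    intro j _
    rw [Pi.star_apply, Complex.star_def, ← Complex.normSq_eq_conj_mul_self, Complex.ofReal_re]
  have h4 : star u ⬝ᵥ u = star v ⬝ᵥ v := by
    have e1 : star v ⬝ᵥ (P *ᵥ u) = star u ⬝ᵥ u := by
      rw [Matrix.dotProduct_mulVec, hstar_u]
    have e2 : P *ᵥ u = (P * Pᴴ) *ᵥ v := by rw [hu, Matrix.mulVec_mulVec]
    rw [← e1, e2, hP, Matrix.one_mulVec]
  rw [h1, h2, ← h4, h3, Finset.mul_sum]
  exact Finset.sum_le_sum fun j _ =>
    mul_le_mul_of_nonneg_right (hd j) (Complex.normSq_nonneg _)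

end QSVT

/-- quaternion singular value thresholding. `S_ξ(Q) = U Λ̆ Vᴴ`, with the singular
values shrunk by `max(σ − ξ, 0)`, is the unique minimizer of
`N(X) = ξ‖X‖_* + ½‖X − Q‖_F²`. -/
theorem qsvt_minimizer {N₁ N₂ : ℕ} (Q : Matrix (Fin N₁) (Fin N₂) (Quaternion ℝ))
    (U : Matrix (Fin N₁) (Fin N₁) (Quaternion ℝ))
    (Λ : Matrix (Fin N₁) (Fin N₂) ℝ)
    (V : Matrix (Fin N₂) (Fin N₂) (Quaternion ℝ))
    (h : IsQSVD Q U Λ V) (ξ : ℝ) (hξ : 0 < ξ) :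
    let S : Matrix (Fin N₁) (Fin N₂) (Quaternion ℝ) :=
      U * rToQ (Matrix.of fun m n =>
        if (m : ℕ) = (n : ℕ) then max (Λ m n - ξ) 0 else 0) * Vᴴ
    ∀ X : Matrix (Fin N₁) (Fin N₂) (Quaternion ℝ),
      (ξ * qNuclearNorm S + (1 / 2) * qFrob (S - Q) ^ 2 ≤
        ξ * qNuclearNorm X + (1 / 2) * qFrob (X - Q) ^ 2) ∧
      (ξ * qNuclearNorm X + (1 / 2) * qFrob (X - Q) ^ 2 =
        ξ * qNuclearNorm S + (1 / 2) * qFrob (S - Q) ^ 2 → X = S) := by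
  intro S X
  open QSVT in
  obtain ⟨hU, hV, ⟨hΛoff, hΛnn⟩, hQ⟩ := h
  set L' : Matrix (Fin N₁) (Fin N₂) ℝ :=
    Matrix.of (fun m n => if (m : ℕ) = (n : ℕ) then max (Λ m n - ξ) 0 else 0) with hL'
  have hS : S = U * rToQ L' * Vᴴ := rfl
  set D : Matrix (Fin N₁) (Fin N₂) ℝ := Λ - L' with hD
  have hL'off : ∀ (m : Fin N₁) (n : Fin N₂), (m : ℕ) ≠ (n : ℕ) → L' m n = 0 := by
    intro m n hmn
    simp [hL', Matrix.of_apply, if_neg hmn]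
  have hDoff : ∀ (m : Fin N₁) (n : Fin N₂), (m : ℕ) ≠ (n : ℕ) → D m n = 0 := by
    intro m n hmn
    simp [hD, Matrix.sub_apply, hΛoff m n hmn, hL'off m n hmn]
  have hWeq : Q - S = U * rToQ D * Vᴴ := by
    rw [hQ, hS, hD, rToQ_sub, Matrix.mul_sub, Matrix.sub_mul]
  -- the singular values
  set σ : Fin N₂ → ℝ := fun k => if h : (k : ℕ) < N₁ then Λ ⟨(k : ℕ), h⟩ k else 0 with hσ
  have hσnn : ∀ k, 0 ≤ σ k := by
    intro k
    rw [hσ]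
    dsimp only
    split
    · exact hΛnn _ _
    · exact le_refl 0
  have hL'diag : ∀ (k : Fin N₂) (h : (k : ℕ) < N₁),
      L' ⟨(k : ℕ), h⟩ k = max (σ k - ξ) 0 := by
    intro k hk
    rw [hL', hσ]
    simp [hk]
  have hDdiag : ∀ (k : Fin N₂) (h : (k : ℕ) < N₁),
      D ⟨(k : ℕ), h⟩ k = σ k - max (σ k - ξ) 0 := by
    intro k hk
    rw [hD, Matrix.sub_apply, hL'diag k hk, hσ]
    simp [hk]
  have ha : ∀ k, ∑ m, (L' m k) ^ 2 = (max (σ k - ξ) 0) ^ 2 := by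
    intro k
    rw [col_sum_eq _ (fun m hm => by rw [hL'off m k hm, sq, zero_mul])]
    split_ifs with hk
    · rw [hL'diag k hk]
    · have : σ k = 0 := by rw [hσ]; simp [hk]
      rw [this]
      rw [max_eq_right (by linarith)]
      ring
  have hb : ∀ k, ∑ m, D m k * L' m k = ξ * max (σ k - ξ) 0 := by
    intro k
    rw [col_sum_eq _ (fun m hm => by rw [hL'off m k hm, mul_zero])]
    split_ifs with hk
    · rw [hL'diag k hk, hDdiag k hk]
      rcases le_or_gt (σ k) ξ with hle | hlt
      · rw [max_eq_right (by linarith)]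
        ring
      · rw [max_eq_left (by linarith)]
        ring
    · have : σ k = 0 := by rw [hσ]; simp [hk]
      rw [this, max_eq_right (by linarith)]
      ring
  have hcbound : ∀ k, ∑ m, (D m k) ^ 2 ≤ ξ ^ 2 := by
    intro k
    rw [col_sum_eq _ (fun m hm => by rw [hDoff m k hm, sq, zero_mul])]
    split_ifs with hk
    · rw [hDdiag k hk]
      have h1 := hσnn k
      rcases le_or_gt (σ k) ξ with hle | hlt
      · rw [max_eq_right (by linarith)]
        nlinarith
      · rw [max_eq_left (by linarith)]
        nlinarith
    · positivity
  -- nuclear norm of S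
  have hnnS : qNuclearNorm S = ∑ k, max (σ k - ξ) 0 := by
    rw [hS, qNuclearNorm_decomp hU hV L' hL'off]
    apply Finset.sum_congr rfl
    intro k _
    rw [ha k]
    exact Real.sqrt_sq (le_max_right _ _)
  -- E1
  have hE1 : qip (Q - S) S = ξ * qNuclearNorm S := by
    rw [hWeq, hS, qip_decomp hU hV D L', hnnS, Finset.mul_sum]
    exact Finset.sum_congr rfl fun k _ => hb k
  -- E2
  have hE2 : qip (Q - S) X ≤ ξ * qNuclearNorm X := by
    have hWdecomp := conj_decomp (V := V) hU D hDoff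
    have hbound := opnorm_of_decomp ξ (qf (U * rToQ D * Vᴴ)) (qf V) (qf_unitary hV).1
      (Sum.elim (fun k => ∑ m, (D m k) ^ 2) (fun k => ∑ m, (D m k) ^ 2))
      (fun j => by rcases j with k | k <;> simpa using hcbound k) hWdecomp
    rw [← hWeq] at hbound
    have hkey := trace_le_nuclear ξ hξ.le (qf (Q - S)) (qf X) hbound
    have hq : qip (Q - S) X = (1 / 2) * (Matrix.trace ((qf (Q - S))ᴴ * qf X)).re :=
      qip_qf _ _
    rw [hq]
    unfold qNuclearNorm
    linarith
  -- algebra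
  have eq1 : qFrob (X - Q) ^ 2 = qip (X - Q) (X - Q) := qFrob_sq _
  have eq2 : qFrob (S - Q) ^ 2 = qip (S - Q) (S - Q) := qFrob_sq _
  have exp1 : qip (X - Q) (X - Q) = qip X X - 2 * qip X Q + qip Q Q := qip_expand _ _
  have exp2 : qip (S - Q) (S - Q) = qip S S - 2 * qip S Q + qip Q Q := qip_expand _ _
  have exp3 : qip (X - S) (X - S) = qip X X - 2 * qip X S + qip S S := qip_expand _ _
  have exp4 : qip (Q - S) X = qip Q X - qip S X := qip_sub_left _ _ _
  have exp5 : qip (Q - S) S = qip Q S - qip S S := qip_sub_left _ _ _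
  have sym1 : qip X Q = qip Q X := qip_symm _ _
  have sym2 : qip X S = qip S X := qip_symm _ _
  have sym3 : qip S Q = qip Q S := qip_symm _ _
  have hpos : 0 ≤ qip (X - S) (X - S) := qip_self_nonneg _
  constructor
  · linarith
  · intro heq
    have hzero : qip (X - S) (X - S) = 0 := by linarith
    have hsum : ∑ m, ∑ n, ‖(X - S) m n‖ ^ 2 = 0 := by rw [← qip_self]; exact hzero
    have hent : ∀ m n, (X - S) m n = 0 := by
      intro m n
      have h1 : ∀ m ∈ (Finset.univ : Finset (Fin N₁)),
          0 ≤ ∑ n, ‖(X - S) m n‖ ^ 2 :=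
        fun m _ => Finset.sum_nonneg fun n _ => sq_nonneg _
      have h2 := (Finset.sum_eq_zero_iff_of_nonneg h1).mp hsum m (Finset.mem_univ m)
      have h3 : ∀ n ∈ (Finset.univ : Finset (Fin N₂)),
          (0:ℝ) ≤ ‖(X - S) m n‖ ^ 2 := fun n _ => sq_nonneg _
      have h4 := (Finset.sum_eq_zero_iff_of_nonneg h3).mp h2 n (Finset.mem_univ n)
      have h5 : ‖(X - S) m n‖ = 0 := by
        have := sq_eq_zero_iff.mp h4
        exact this
      exact norm_eq_zero.mp h5
    have : X - S = 0 := by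
      funext m n
      exact hent m n
    exact sub_eq_zero.mp this
end
end
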